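/- arXiv:1707.02952 — 3 statements merged into one kernel-verified Lean document; each statement's English description precedes it below -/
import Mathlib

section
/- Let W = W₁ × W₂ be a finite Coxeter group with S = S₁ ⊔ S₂ and τ : Ω → Ω₁ ⊗_ℤ Ω₂ the homomorphism determined by e_s ↦ e_s⊗1, x_s ↦ x_s⊗1 (s ∈ S₁) and e_s ↦ 1⊗e_s, x_s ↦ 1⊗x_s (s ∈ S₂). Then for all I = I₁ ⊔ I₂ and J = J₁ ⊔ J₂ ⊆ S: τ(E_I) = E_{I₁} ⊗ E_{I₂}, and τ(X_{IJ}^s) = X_{I₁J₁}^s ⊗ E_{I₂}E_{J₂} if s ∈ S₁ while τ(X_{IJ}^s) = E_{I₁}E_{J₁} ⊗ X_{I₂J₂}^s if s ∈ S₂. -/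
open scoped TensorProduct

noncomputable section

namespace WGraphPaper

variable (k : Type*) [CommRing k] {B B₁ B₂ : Type*}

/-! ### Gyoja's W-graph algebra with coefficients in `k`
(`Omega ℤ M` is the W-graph algebra `Ω(W,S)` itself, `Omega k M` is `kΩ`). -/

/-- The free ring `k⟨e_b, x_b | b ∈ B⟩`; `Sum.inl b` encodes the generator `e_b` and
`Sum.inr b` encodes the generator `x_b`. -/
abbrev FreeGen (B : Type*) := FreeAlgebra k (B ⊕ B)

def eGen (b : B) : FreeGen k B := FreeAlgebra.ι k (Sum.inl b)
def xGen (b : B) : FreeGen k B := FreeAlgebra.ι k (Sum.inr b)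

/-- `altProd a b n` is the alternating product `a * b * a * ⋯` with `n` factors. -/
def altProd {A : Type*} [Monoid A] : A → A → ℕ → A
  | _, _, 0 => 1
  | a, b, n + 1 => a * altProd b a n

/-- The braid commutator `Δ_m(a,b) = (a b a ⋯) - (b a b ⋯)` (`m` factors each). -/
def braidComm {A : Type*} [Ring A] (m : ℕ) (a b : A) : A := altProd a b m - altProd b a m

/-- `ι(T_b) = -v⁻¹ e_b + v (1 - e_b) + x_b`, an element of `(FreeGen k B)[v,v⁻¹]`. -/
def iotaT (b : B) : LaurentPolynomial (FreeGen k B) :=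
  LaurentPolynomial.C (-(eGen k b)) * LaurentPolynomial.T (-1)
    + LaurentPolynomial.C (1 - eGen k b) * LaurentPolynomial.T 1
    + LaurentPolynomial.C (xGen k b)

/-- The coefficient of `v^n` in a Laurent polynomial. -/
def lcoeff {R : Type*} [Semiring R] (p : LaurentPolynomial R) (n : ℤ) : R :=
  (show ℤ →₀ R from AddMonoidAlgebra.coeff p) n

/-- The defining relations of Gyoja's W-graph algebra: the relations (a) and (b) together
with the vanishing of all Laurent coefficients `y^γ(s,t)` of the braid commutators
`Δ_{m_{st}}(ι(T_s), ι(T_t))` (for `m_{st} < ∞`, i.e. `M s t ≠ 0`). -/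
inductive OmegaRel (M : CoxeterMatrix B) : FreeGen k B → FreeGen k B → Prop
  | e_idem (b : B) : OmegaRel M (eGen k b * eGen k b) (eGen k b)
  | e_comm (b b' : B) : OmegaRel M (eGen k b * eGen k b') (eGen k b' * eGen k b)
  | ex (b : B) : OmegaRel M (eGen k b * xGen k b) (xGen k b)
  | xe (b : B) : OmegaRel M (xGen k b * eGen k b) 0
  | braid (b b' : B) (h : M b b' ≠ 0) (γ : ℤ) :
      OmegaRel M (lcoeff (braidComm (M b b') (iotaT k b) (iotaT k b')) γ) 0

/-- Gyoja's W-graph algebra `Ω(W,S)` (for `k = ℤ`), resp. `kΩ(W,S)`, defined from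
the Coxeter matrix of `(W,S)`. -/
abbrev Omega (M : CoxeterMatrix B) := RingQuot (OmegaRel k M)

/-- The image of the generator `e_b` in `Ω`. -/
def eOm (M : CoxeterMatrix B) (b : B) : Omega k M :=
  RingQuot.mkRingHom (OmegaRel k M) (eGen k b)

/-- The image of the generator `x_b` in `Ω`. -/
def xOm (M : CoxeterMatrix B) (b : B) : Omega k M :=
  RingQuot.mkRingHom (OmegaRel k M) (xGen k b)

lemma commute_eOm (M : CoxeterMatrix B) (b b' : B) : Commute (eOm k M b) (eOm k M b') := by
  show _ = _
  rw [eOm, eOm, ← map_mul, ← map_mul]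
  exact RingQuot.mkRingHom_rel (OmegaRel.e_comm b b')

lemma commute_oneSubEOm (M : CoxeterMatrix B) (b b' : B) :
    Commute (1 - eOm k M b) (1 - eOm k M b') :=
  (Commute.one_left _).sub_left ((Commute.one_right _).sub_right (commute_eOm k M b b'))

variable [Fintype B] [DecidableEq B] [DecidableEq B₁] [DecidableEq B₂]

/-- The idempotent `E_I = (∏_{t ∈ I} e_t) (∏_{t ∈ S∖I} (1 - e_t))`. -/
def EOm (M : CoxeterMatrix B) (I : Finset B) : Omega k M :=
  (I.noncommProd (fun b => eOm k M b) (fun _ _ _ _ _ => commute_eOm k M _ _)) *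
    ((Iᶜ).noncommProd (fun b => 1 - eOm k M b) (fun _ _ _ _ _ => commute_oneSubEOm k M _ _))

/-- The edge element `X_{IJ}^s = E_I x_s E_J`. -/
def XOm (M : CoxeterMatrix B) (I J : Finset B) (s : B) : Omega k M :=
  EOm k M I * xOm k M s * EOm k M J

/-- `I ← J` is an edge of the compatibility graph `Q_W`: `I ∖ J ≠ ∅` and no element of
`I ∖ J` commutes (in `W`, i.e. `m_{st} = 2`) with an element of `J ∖ I`. -/
def QEdge (M : CoxeterMatrix B) (I J : Finset B) : Prop :=
  (I \ J).Nonempty ∧ ∀ s ∈ I \ J, ∀ t ∈ J \ I, M s t ≠ 2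

/-- `I ⇆ J`: `I` and `J` are joined by a pair of transversal edges of `Q_W`. -/
def Transversal (M : CoxeterMatrix B) (I J : Finset B) : Prop :=
  QEdge M I J ∧ (J \ I).Nonempty

/-- The generators of the subalgebra `Ψ(W,S)`: all `E_I` and all transversal edge
elements `X_{IJ}`. -/
def psiGens (M : CoxeterMatrix B) : Set (Omega k M) :=
  {a | ∃ I : Finset B, a = EOm k M I} ∪
    {a | ∃ I J : Finset B, ∃ s : B, Transversal M I J ∧ s ∈ I \ J ∧ a = XOm k M I J s}

/-- The subring `Ψ(W,S) ⊆ Ω(W,S)` generated by all `E_I` and all transversal edges. -/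
def Psi (M : CoxeterMatrix B) : Subring (Omega k M) := Subring.closure (psiGens k M)

/-- The subalgebra `kΨ(W,S) ⊆ kΩ(W,S)` generated by all `E_I` and all transversal edges. -/
def PsiAlg (M : CoxeterMatrix B) : Subalgebra k (Omega k M) :=
  Algebra.adjoin k (psiGens k M)

/-! ### Products of Coxeter systems -/

/-- The Coxeter matrix of the product `W₁ × W₂`, on `S = S₁ ⊔ S₂` (each element of `S₁`
commutes with each element of `S₂`). -/
def prodMatrix (M₁ : CoxeterMatrix B₁) (M₂ : CoxeterMatrix B₂) : CoxeterMatrix (B₁ ⊕ B₂) where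
  M i j :=
    match i, j with
    | Sum.inl a, Sum.inl b => M₁ a b
    | Sum.inr a, Sum.inr b => M₂ a b
    | _, _ => 2
  isSymm := by
    unfold Matrix.IsSymm
    ext i j
    rcases i with a | a <;> rcases j with b | b <;>
      simp only [Matrix.transpose_apply] <;>
      first
        | exact M₁.symmetric b a
        | exact M₂.symmetric b a
        | rfl
  diagonal i := by rcases i with a | a <;> simp [CoxeterMatrix.diagonal]
  off_diagonal i j h := by
    rcases i with a | a <;> rcases j with b | b
    · exact M₁.off_diagonal a b (by rintro rfl; exact h rfl)
    · simp
    · simp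
    · exact M₂.off_diagonal a b (by rintro rfl; exact h rfl)

def inlEmb : B₁ ↪ B₁ ⊕ B₂ := ⟨Sum.inl, Sum.inl_injective⟩
def inrEmb : B₂ ↪ B₁ ⊕ B₂ := ⟨Sum.inr, Sum.inr_injective⟩

/-- The subset `I ⊔ K` of `S = S₁ ⊔ S₂`, for `I ⊆ S₁` and `K ⊆ S₂`. -/
def fjoin (I : Finset B₁) (K : Finset B₂) : Finset (B₁ ⊕ B₂) :=
  I.map inlEmb ∪ K.map inrEmb

/-- The part `I₁ = I ∩ S₁` of a subset `I ⊆ S = S₁ ⊔ S₂`. -/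
def part1 (I : Finset (B₁ ⊕ B₂)) : Finset B₁ :=
  I.preimage Sum.inl Sum.inl_injective.injOn

/-- The part `I₂ = I ∩ S₂` of a subset `I ⊆ S = S₁ ⊔ S₂`. -/
def part2 (I : Finset (B₁ ⊕ B₂)) : Finset B₂ :=
  I.preimage Sum.inr Sum.inr_injective.injOn

variable (M₁ : CoxeterMatrix B₁) (M₂ : CoxeterMatrix B₂)

/-- `f` is the parabolic morphism `ι₁ : Ω₁ → Ω` (it sends `e_s ↦ e_s`, `x_s ↦ x_s`
for `s ∈ S₁`). -/
def Parab1Cond (f : Omega k M₁ → Omega k (prodMatrix M₁ M₂)) : Prop :=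
  ∀ b : B₁, f (eOm k M₁ b) = eOm k (prodMatrix M₁ M₂) (Sum.inl b) ∧
    f (xOm k M₁ b) = xOm k (prodMatrix M₁ M₂) (Sum.inl b)

/-- `f` is the parabolic morphism `ι₂ : Ω₂ → Ω` (it sends `e_s ↦ e_s`, `x_s ↦ x_s`
for `s ∈ S₂`). -/
def Parab2Cond (f : Omega k M₂ → Omega k (prodMatrix M₁ M₂)) : Prop :=
  ∀ b : B₂, f (eOm k M₂ b) = eOm k (prodMatrix M₁ M₂) (Sum.inr b) ∧
    f (xOm k M₂ b) = xOm k (prodMatrix M₁ M₂) (Sum.inr b)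

/-- `t` is the morphism `τ : Ω → Ω₁ ⊗ Ω₂` of the paper: it sends `e_s ↦ e_s ⊗ 1`,
`x_s ↦ x_s ⊗ 1` for `s ∈ S₁` and `e_s ↦ 1 ⊗ e_s`, `x_s ↦ 1 ⊗ x_s` for `s ∈ S₂`. -/
def TauCond (t : Omega k (prodMatrix M₁ M₂) → Omega k M₁ ⊗[k] Omega k M₂) : Prop :=
  (∀ b : B₁, t (eOm k (prodMatrix M₁ M₂) (Sum.inl b)) = eOm k M₁ b ⊗ₜ[k] 1 ∧
      t (xOm k (prodMatrix M₁ M₂) (Sum.inl b)) = xOm k M₁ b ⊗ₜ[k] 1) ∧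
  (∀ b : B₂, t (eOm k (prodMatrix M₁ M₂) (Sum.inr b)) = 1 ⊗ₜ[k] eOm k M₂ b ∧
      t (xOm k (prodMatrix M₁ M₂) (Sum.inr b)) = 1 ⊗ₜ[k] xOm k M₂ b)



/-- The coefficientwise extension of a ring homomorphism to Laurent polynomial rings. -/
def laurentMap {R A : Type*} [Semiring R] [Semiring A] (f : R →+* A) :
    LaurentPolynomial R →+* LaurentPolynomial A :=
  AddMonoidAlgebra.liftNCRingHom (LaurentPolynomial.C.comp f)
    { toFun := fun n => LaurentPolynomial.T (Multiplicative.toAdd n)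
      map_one' := LaurentPolynomial.T_zero
      map_mul' := fun _ _ => LaurentPolynomial.T_add _ _ }
    (fun _ n => (LaurentPolynomial.commute_T (Multiplicative.toAdd n) _).symm)

/-- `k` is a good ring for `(W,S)`: it contains `2cos(2π/m_{st})` for all `s,t ∈ S`. -/
def GoodRing (M : CoxeterMatrix B) (k : Subring ℂ) : Prop :=
  ∀ i j : B, M i j ≠ 0 → (2 * Complex.cos (2 * Real.pi / (M i j : ℂ))) ∈ k

/-- The irreducible complex characters of a finite group `G`. -/
def IrrChar (G : Type) [Group G] : Type :=
  {χ : G → ℂ // ∃ V : FDRep ℂ G, CategoryTheory.Simple V ∧ χ = FDRep.character V}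

/-- The degree `d_λ` of an irreducible character `λ` (its value at `1`). -/
def IrrChar.degree {G : Type} [Group G] (χ : IrrChar G) : ℕ := ⌊(χ.val 1).re⌋₊

variable {ι : Type*}

/-- (Z1): the `F^λ` are a decomposition of the identity into orthogonal idempotents. -/
def Z1 {A : Type*} [Ring A] (F : ι → A) : Prop :=
  (∀ l, F l * F l = F l) ∧ (∀ l m, l ≠ m → F l * F m = 0) ∧ ∑ᶠ l, F l = 1

variable [Fintype B] [DecidableEq B]

/-- (Z2): the decomposition is compatible with the one coming from the path-algebra
structure: `E_I F^λ = F^λ E_I`. -/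
def Z2 (M : CoxeterMatrix B) (F : ι → Omega k M) : Prop :=
  ∀ l (I : Finset B), EOm k M I * F l = F l * EOm k M I

/-- (Z3), with a specified partial order `le`: only "downward edges" exist,
i.e. `F^λ Ω F^μ ≠ 0 → λ ⪯ μ`. -/
def Z3At {A : Type*} [Ring A] (F : ι → A) (le : ι → ι → Prop) : Prop :=
  ∀ l m, (∃ a : A, F l * a * F m ≠ 0) → le l m

/-- (Z3): there is a partial order on `Irr(W)` such that only "downward edges" exist. -/
def Z3 {A : Type*} [Ring A] (F : ι → A) : Prop :=
  ∃ le : ι → ι → Prop, IsPartialOrder ι le ∧ Z3At F le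

/-- (Z4): there are surjective `k`-algebra morphisms `k^{d_λ×d_λ} ↠ F^λ kΩ F^λ`. -/
def Z4 (M : CoxeterMatrix B) (F : ι → Omega k M) (d : ι → ℕ) : Prop :=
  ∀ l, ∃ ψ : Matrix (Fin (d l)) (Fin (d l)) k →ₗ[k] Omega k M,
    (∀ x y, ψ (x * y) = ψ x * ψ y) ∧ ψ 1 = F l ∧
      Set.range ψ = {z | ∃ a : Omega k M, z = F l * a * F l}

/-- (Z5): `F^λ X_{IJ} F^λ ∈ kΨ(W,S)` for all edges `I ← J` of `Q_W`. -/
def Z5 (M : CoxeterMatrix B) (F : ι → Omega k M) : Prop :=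
  ∀ l (I J : Finset B) (s : B), QEdge M I J → s ∈ I \ J →
    F l * XOm k M I J s * F l ∈ PsiAlg k M

/-- (Z6): `F^λ ∈ kΨ(W,S)`. -/
def Z6 (M : CoxeterMatrix B) (F : ι → Omega k M) : Prop :=
  ∀ l, F l ∈ PsiAlg k M

/-- The family satisfies all of (Z1)–(Z6), i.e. the strong W-graph decomposition
conjecture holds via this family (`d` is the degree function on `Irr(W)`). -/
def StrongZ (M : CoxeterMatrix B) (F : ι → Omega k M) (d : ι → ℕ) : Prop :=
  Z1 F ∧ Z2 k M F ∧ Z3 F ∧ Z4 k M F d ∧ Z5 k M F ∧ Z6 k M F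

/-- The maximal length (number of steps) of a strict chain for the relation `le`. -/
def orderHeight (le : ι → ι → Prop) : ℕ :=
  sSup {n | ∃ c : Fin (n + 1) → ι, Function.Injective c ∧
    ∀ i j : Fin (n + 1), i < j → le (c i) (c j)}



section Statement6Aux

variable {B₁ B₂ : Type*} [DecidableEq B₁] [DecidableEq B₂]

lemma part1_cons_inl (b : B₁) (K : Finset (B₁ ⊕ B₂)) (h : Sum.inl b ∉ K) :
    part1 (Finset.cons (Sum.inl b) K h) = insert b (part1 K) := by
  ext a; simp [part1]

lemma part2_cons_inl (b : B₁) (K : Finset (B₁ ⊕ B₂)) (h : Sum.inl b ∉ K) :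
    part2 (Finset.cons (Sum.inl b) K h) = part2 K := by
  ext a; simp [part2]

lemma part1_cons_inr (b : B₂) (K : Finset (B₁ ⊕ B₂)) (h : Sum.inr b ∉ K) :
    part1 (Finset.cons (Sum.inr b) K h) = part1 K := by
  ext a; simp [part1]

lemma part2_cons_inr (b : B₂) (K : Finset (B₁ ⊕ B₂)) (h : Sum.inr b ∉ K) :
    part2 (Finset.cons (Sum.inr b) K h) = insert b (part2 K) := by
  ext a; simp [part2]

lemma part1_compl [Fintype B₁] [Fintype B₂] (I : Finset (B₁ ⊕ B₂)) :
    part1 Iᶜ = (part1 I)ᶜ := by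
  ext a; simp [part1]

lemma part2_compl [Fintype B₁] [Fintype B₂] (I : Finset (B₁ ⊕ B₂)) :
    part2 Iᶜ = (part2 I)ᶜ := by
  ext a; simp [part2]

variable (N₁ : CoxeterMatrix B₁) (N₂ : CoxeterMatrix B₂)

local notation "R₁" => Omega k N₁
local notation "R₂" => Omega k N₂

lemma commute_elim_tmul (f₁ : B₁ → R₁) (f₂ : B₂ → R₂)
    (h₁ : ∀ a b, Commute (f₁ a) (f₁ b)) (h₂ : ∀ a b, Commute (f₂ a) (f₂ b))
    (x y : B₁ ⊕ B₂) :
    Commute (Sum.elim (fun a => f₁ a ⊗ₜ[k] (1 : R₂)) (fun a => (1 : R₁) ⊗ₜ[k] f₂ a) x)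
      (Sum.elim (fun a => f₁ a ⊗ₜ[k] (1 : R₂)) (fun a => (1 : R₁) ⊗ₜ[k] f₂ a) y) := by
  rcases x with a | a <;> rcases y with b | b <;>
    simp only [Sum.elim_inl, Sum.elim_inr, Commute, SemiconjBy,
      Algebra.TensorProduct.tmul_mul_tmul, one_mul, mul_one]
  · rw [(h₁ a b).eq]
  · rw [(h₂ a b).eq]

lemma noncommProd_split (f₁ : B₁ → R₁) (f₂ : B₂ → R₂)
    (h₁ : ∀ a b, Commute (f₁ a) (f₁ b)) (h₂ : ∀ a b, Commute (f₂ a) (f₂ b))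
    (K : Finset (B₁ ⊕ B₂)) :
    K.noncommProd (Sum.elim (fun a => f₁ a ⊗ₜ[k] (1 : R₂)) (fun a => (1 : R₁) ⊗ₜ[k] f₂ a))
        (fun x _ y _ _ => commute_elim_tmul k N₁ N₂ f₁ f₂ h₁ h₂ x y) =
      (part1 K).noncommProd f₁ (fun x _ y _ _ => h₁ x y) ⊗ₜ[k]
        (part2 K).noncommProd f₂ (fun x _ y _ _ => h₂ x y) := by
  induction K using Finset.cons_induction with
  | empty =>
      have e1 : part1 (∅ : Finset (B₁ ⊕ B₂)) = ∅ := by ext a; simp [part1]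
      have e2 : part2 (∅ : Finset (B₁ ⊕ B₂)) = ∅ := by ext a; simp [part2]
      erw [e1, e2, Finset.noncommProd_empty, Finset.noncommProd_empty,
        Finset.noncommProd_empty, Algebra.TensorProduct.one_def]
  | cons a K ha ih =>
      erw [Finset.noncommProd_cons, ih]
      rcases a with b | b
      · rw [part1_cons_inl, part2_cons_inl]
        have hb : b ∉ part1 K := by simp [part1, ha]
        erw [Finset.noncommProd_insert_of_notMem _ _ _ _ hb, Sum.elim_inl,
          Algebra.TensorProduct.tmul_mul_tmul, one_mul]
      · rw [part1_cons_inr, part2_cons_inr]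
        have hb : b ∉ part2 K := by simp [part2, ha]
        erw [Finset.noncommProd_insert_of_notMem _ _ _ _ hb, Sum.elim_inr,
          Algebra.TensorProduct.tmul_mul_tmul, one_mul]

end Statement6Aux

theorem statement6_gen {B₁ B₂ : Type*} [Fintype B₁] [DecidableEq B₁] [Fintype B₂]
    [DecidableEq B₂] (M₁ : CoxeterMatrix B₁) (M₂ : CoxeterMatrix B₂)
    (t : Omega k (prodMatrix M₁ M₂) →+* Omega k M₁ ⊗[k] Omega k M₂)
    (ht : TauCond k M₁ M₂ ⇑t) :
    (∀ I : Finset (B₁ ⊕ B₂),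
      t (EOm k (prodMatrix M₁ M₂) I) = EOm k M₁ (part1 I) ⊗ₜ[k] EOm k M₂ (part2 I)) ∧
    (∀ I J : Finset (B₁ ⊕ B₂), ∀ s : B₁,
      t (XOm k (prodMatrix M₁ M₂) I J (Sum.inl s)) =
        XOm k M₁ (part1 I) (part1 J) s ⊗ₜ[k] (EOm k M₂ (part2 I) * EOm k M₂ (part2 J))) ∧
    (∀ I J : Finset (B₁ ⊕ B₂), ∀ s : B₂,
      t (XOm k (prodMatrix M₁ M₂) I J (Sum.inr s)) =
        (EOm k M₁ (part1 I) * EOm k M₁ (part1 J)) ⊗ₜ[k] XOm k M₂ (part2 I) (part2 J) s) := by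
  classical
  have key : ∀ (K : Finset (B₁ ⊕ B₂)) (f : (B₁ ⊕ B₂) → Omega k (prodMatrix M₁ M₂))
      (f₁ : B₁ → Omega k M₁) (f₂ : B₂ → Omega k M₂)
      (h₁ : ∀ a b, Commute (f₁ a) (f₁ b)) (h₂ : ∀ a b, Commute (f₂ a) (f₂ b))
      (hf1 : ∀ b, t (f (Sum.inl b)) = f₁ b ⊗ₜ[k] 1)
      (hf2 : ∀ b, t (f (Sum.inr b)) = (1 : Omega k M₁) ⊗ₜ[k] f₂ b)
      (comm : (↑K : Set (B₁ ⊕ B₂)).Pairwise (Function.onFun Commute f)),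
      t (K.noncommProd f comm) =
        (part1 K).noncommProd f₁ (fun x _ y _ _ => h₁ x y) ⊗ₜ[k]
          (part2 K).noncommProd f₂ (fun x _ y _ _ => h₂ x y) := by
    intro K f f₁ f₂ h₁ h₂ hf1 hf2 comm
    exact (Finset.map_noncommProd K f comm t).trans
      ((Finset.noncommProd_congr rfl
          (g := Sum.elim (fun a => f₁ a ⊗ₜ[k] (1 : Omega k M₂))
            (fun a => (1 : Omega k M₁) ⊗ₜ[k] f₂ a))
          (fun x _ => by rcases x with b | b
                         · exact hf1 b
                         · exact hf2 b) _).trans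
        (noncommProd_split k M₁ M₂ f₁ f₂ h₁ h₂ K))
  have hE : ∀ I : Finset (B₁ ⊕ B₂),
      t (EOm k (prodMatrix M₁ M₂) I) = EOm k M₁ (part1 I) ⊗ₜ[k] EOm k M₂ (part2 I) := by
    intro I
    rw [EOm, map_mul]
    erw [
      key I _ (eOm k M₁) (eOm k M₂) (commute_eOm k M₁) (commute_eOm k M₂)
        (fun b => (ht.1 b).1) (fun b => (ht.2 b).1) _,
      key Iᶜ _ (fun b => 1 - eOm k M₁ b) (fun b => 1 - eOm k M₂ b)
        (commute_oneSubEOm k M₁) (commute_oneSubEOm k M₂)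
        (fun b => by
          rw [map_sub, map_one, (ht.1 b).1, Algebra.TensorProduct.one_def,
            ← TensorProduct.sub_tmul])
        (fun b => by
          rw [map_sub, map_one, (ht.2 b).1, Algebra.TensorProduct.one_def,
            ← TensorProduct.tmul_sub]) _]
    rw [part1_compl, part2_compl, Algebra.TensorProduct.tmul_mul_tmul]
    rfl
  refine ⟨hE, fun I J s => ?_, fun I J s => ?_⟩
  · simp only [XOm, map_mul, hE, (ht.1 s).2, Algebra.TensorProduct.tmul_mul_tmul,
      mul_one, one_mul]
  · simp only [XOm, map_mul, hE, (ht.2 s).2, Algebra.TensorProduct.tmul_mul_tmul,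
      mul_one, one_mul]

/-- the morphism `τ : Ω → Ω₁ ⊗_ℤ Ω₂` satisfies
`τ(E_I) = E_{I₁} ⊗ E_{I₂}` and `τ(X_{IJ}^s) = X_{I₁J₁}^s ⊗ E_{I₂}E_{J₂}` for `s ∈ S₁`,
resp. `τ(X_{IJ}^s) = E_{I₁}E_{J₁} ⊗ X_{I₂J₂}^s` for `s ∈ S₂`. -/
theorem statement6 {B₁ B₂ : Type*} [Fintype B₁] [DecidableEq B₁] [Fintype B₂]
    [DecidableEq B₂] (M₁ : CoxeterMatrix B₁) (M₂ : CoxeterMatrix B₂)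
    {W₁ W₂ : Type*} [Group W₁] [Group W₂] [Finite W₁] [Finite W₂]
    (cs₁ : CoxeterSystem M₁ W₁) (cs₂ : CoxeterSystem M₂ W₂)
    (cs : CoxeterSystem (prodMatrix M₁ M₂) (W₁ × W₂))
    (t : Omega ℤ (prodMatrix M₁ M₂) →+* Omega ℤ M₁ ⊗[ℤ] Omega ℤ M₂)
    (ht : TauCond ℤ M₁ M₂ ⇑t) :
    (∀ I : Finset (B₁ ⊕ B₂),
      t (EOm ℤ (prodMatrix M₁ M₂) I) = EOm ℤ M₁ (part1 I) ⊗ₜ[ℤ] EOm ℤ M₂ (part2 I)) ∧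
    (∀ I J : Finset (B₁ ⊕ B₂), ∀ s : B₁,
      t (XOm ℤ (prodMatrix M₁ M₂) I J (Sum.inl s)) =
        XOm ℤ M₁ (part1 I) (part1 J) s ⊗ₜ[ℤ] (EOm ℤ M₂ (part2 I) * EOm ℤ M₂ (part2 J))) ∧
    (∀ I J : Finset (B₁ ⊕ B₂), ∀ s : B₂,
      t (XOm ℤ (prodMatrix M₁ M₂) I J (Sum.inr s)) =
        (EOm ℤ M₁ (part1 I) * EOm ℤ M₁ (part1 J)) ⊗ₜ[ℤ] XOm ℤ M₂ (part2 I) (part2 J) s) := by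
  exact statement6_gen ℤ M₁ M₂ t ht

end WGraphPaper

end
end

section
/- Let W = W₁ × W₂ be a finite Coxeter group with S = S₁ ⊔ S₂ and τ : Ω → Ω₁ ⊗_ℤ Ω₂ the homomorphism determined by e_s ↦ e_s⊗1, x_s ↦ x_s⊗1 (s ∈ S₁) and e_s ↦ 1⊗e_s, x_s ↦ 1⊗x_s (s ∈ S₂). Then τ maps the subalgebra Ψ(W,S) onto Ψ(W₁,S₁) ⊗_ℤ Ψ(W₂,S₂). -/
open scoped TensorProduct

noncomputable section

namespace WGraphPaper

variable (k : Type*) [CommRing k] {B B₁ B₂ : Type*}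

variable [Fintype B] [DecidableEq B] [DecidableEq B₁] [DecidableEq B₂]

variable (M₁ : CoxeterMatrix B₁) (M₂ : CoxeterMatrix B₂)

variable {ι : Type*}

variable [Fintype B] [DecidableEq B]

section Statement7Aux

/-! ### Auxiliary lemmas for Statement 7 -/

@[simp] lemma inlEmb_apply (b : B₁) : (inlEmb b : B₁ ⊕ B₂) = Sum.inl b := rfl
@[simp] lemma inrEmb_apply (b : B₂) : (inrEmb b : B₁ ⊕ B₂) = Sum.inr b := rfl

variable {A : Type*} [Ring A]

lemma noncommProd_map_emb {α β : Type*} [DecidableEq α] [DecidableEq β]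
    (e : α ↪ β) (s : Finset α) (f : β → A) (hcomm : ∀ x y, Commute (f x) (f y)) :
    (s.map e).noncommProd f (fun _ _ _ _ _ => hcomm _ _) =
      s.noncommProd (fun a => f (e a)) (fun _ _ _ _ _ => hcomm _ _) := by
  induction s using Finset.induction_on with
  | empty => simp; rfl
  | @insert a s ha ih =>
    erw [Finset.map_insert,
      Finset.noncommProd_insert_of_notMem _ _ _ _ (by simpa using ha),
      Finset.noncommProd_insert_of_notMem _ _ _ _ ha, ih]

lemma noncommProd_fjoin {B₁ B₂ : Type*} [DecidableEq B₁] [DecidableEq B₂]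
    (I : Finset B₁) (K : Finset B₂) (f : B₁ ⊕ B₂ → A)
    (hcomm : ∀ x y, Commute (f x) (f y)) :
    (fjoin I K).noncommProd f (fun _ _ _ _ _ => hcomm _ _) =
      I.noncommProd (fun a => f (Sum.inl a)) (fun _ _ _ _ _ => hcomm _ _) *
        K.noncommProd (fun a => f (Sum.inr a)) (fun _ _ _ _ _ => hcomm _ _) := by
  have hdisj : Disjoint (I.map inlEmb) (K.map (inrEmb : B₂ ↪ B₁ ⊕ B₂)) := by
    simp only [Finset.disjoint_left, Finset.mem_map, inlEmb_apply, inrEmb_apply]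
    rintro x ⟨a, _, rfl⟩ ⟨b, _, h⟩
    exact Sum.inl_ne_inr h.symm
  erw [fjoin, Finset.noncommProd_union_of_disjoint hdisj, noncommProd_map_emb,
    noncommProd_map_emb]
  · rfl
  all_goals exact hcomm

lemma noncommProd_idem {α : Type*} [DecidableEq α] (s : Finset α) (f : α → A)
    (hcomm : ∀ x y, Commute (f x) (f y)) (hid : ∀ x, f x * f x = f x) :
    s.noncommProd f (fun _ _ _ _ _ => hcomm _ _) *
      s.noncommProd f (fun _ _ _ _ _ => hcomm _ _) =
      s.noncommProd f (fun _ _ _ _ _ => hcomm _ _) := by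
  induction s using Finset.induction_on with
  | empty => erw [Finset.noncommProd_empty, mul_one]
  | @insert a s ha ih =>
    erw [Finset.noncommProd_insert_of_notMem _ _ _ _ ha]
    set P := s.noncommProd f (fun _ _ _ _ _ => hcomm _ _) with hP
    have hc : Commute (f a) P :=
      Finset.noncommProd_commute _ _ _ _ (fun x _ => hcomm a x)
    calc (f a * P) * (f a * P) = f a * (P * f a) * P := by
          rw [mul_assoc, mul_assoc, mul_assoc]
      _ = f a * (f a * P) * P := by rw [← hc.eq]
      _ = (f a * f a) * (P * P) := by rw [mul_assoc, mul_assoc, mul_assoc]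
      _ = f a * P := by rw [hid a, ih]

lemma sum_E_powerset {α : Type*} [DecidableEq α] (f : α → A)
    (hcomm : ∀ x y, Commute (f x) (f y)) (T : Finset α) :
    ∑ K ∈ T.powerset,
      (K.noncommProd f (fun _ _ _ _ _ => hcomm _ _)) *
        ((T \ K).noncommProd (fun b => 1 - f b) (fun _ _ _ _ _ =>
          (Commute.one_left _).sub_left ((Commute.one_right _).sub_right (hcomm _ _)))) = 1 := by
  induction T using Finset.induction_on with
  | empty => simp; rfl
  | @insert a T ha ih =>
    rw [Finset.sum_powerset_insert ha]
    have h1 : ∀ K ∈ T.powerset,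
        (K.noncommProd f (fun _ _ _ _ _ => hcomm _ _)) *
          ((insert a T \ K).noncommProd (fun b => 1 - f b) (fun _ _ _ _ _ =>
            (Commute.one_left _).sub_left ((Commute.one_right _).sub_right (hcomm _ _)))) =
        (1 - f a) * ((K.noncommProd f (fun _ _ _ _ _ => hcomm _ _)) *
          ((T \ K).noncommProd (fun b => 1 - f b) (fun _ _ _ _ _ =>
            (Commute.one_left _).sub_left ((Commute.one_right _).sub_right (hcomm _ _))))) := by
      intro K hK
      rw [Finset.mem_powerset] at hK
      have haK : a ∉ K := fun h => ha (hK h)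
      have hins : insert a T \ K = insert a (T \ K) := by
        rw [Finset.insert_sdiff_of_notMem _ haK]
      have haTK : a ∉ T \ K := fun h => ha (Finset.mem_sdiff.1 h).1
      erw [Finset.noncommProd_congr hins (fun _ _ => rfl),
        Finset.noncommProd_insert_of_notMem _ _ _ _ haTK]
      have hcP : Commute (1 - f a) (K.noncommProd f (fun _ _ _ _ _ => hcomm _ _)) :=
        Finset.noncommProd_commute _ _ _ _
          (fun x _ => (Commute.one_left _).sub_left (hcomm a x))
      rw [← mul_assoc, ← hcP.eq, mul_assoc]
    have h2 : ∀ K ∈ T.powerset,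
        ((insert a K).noncommProd f (fun _ _ _ _ _ => hcomm _ _)) *
          ((insert a T \ insert a K).noncommProd (fun b => 1 - f b) (fun _ _ _ _ _ =>
            (Commute.one_left _).sub_left ((Commute.one_right _).sub_right (hcomm _ _)))) =
        f a * ((K.noncommProd f (fun _ _ _ _ _ => hcomm _ _)) *
          ((T \ K).noncommProd (fun b => 1 - f b) (fun _ _ _ _ _ =>
            (Commute.one_left _).sub_left ((Commute.one_right _).sub_right (hcomm _ _))))) := by
      intro K hK
      rw [Finset.mem_powerset] at hK
      have haK : a ∉ K := fun h => ha (hK h)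
      have hd : insert a T \ insert a K = T \ K := by
        ext x
        simp only [Finset.mem_sdiff, Finset.mem_insert, not_or]
        constructor
        · rintro ⟨rfl | hx, hxa, hxK⟩
          · exact absurd rfl hxa
          · exact ⟨hx, hxK⟩
        · rintro ⟨hx, hxK⟩
          exact ⟨Or.inr hx, fun h => ha (h ▸ hx), hxK⟩
      erw [Finset.noncommProd_congr hd (fun _ _ => rfl),
        Finset.noncommProd_insert_of_notMem _ _ _ _ haK, mul_assoc]
    rw [Finset.sum_congr rfl h1, Finset.sum_congr rfl h2, ← Finset.sum_add_distrib]
    have h3 : ∀ z : A, (1 - f a) * z + f a * z = z := by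
      intro z
      rw [sub_mul, one_mul, sub_add_cancel]
    rw [Finset.sum_congr rfl (fun K _ => h3 _), ih]

lemma mul_mul_idem {P Q : A} (hPP : P * P = P) (hQQ : Q * Q = Q)
    (hc : Commute P Q) : (P * Q) * (P * Q) = P * Q := by
  calc (P * Q) * (P * Q) = P * (Q * P) * Q := by rw [mul_assoc, mul_assoc, mul_assoc]
    _ = P * (P * Q) * Q := by rw [← hc.eq]
    _ = (P * P) * (Q * Q) := by rw [mul_assoc, mul_assoc, mul_assoc]
    _ = P * Q := by rw [hPP, hQQ]

lemma commute_tmul {R A₁ A₂ : Type*} [CommRing R] [Ring A₁] [Ring A₂] [Algebra R A₁]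
    [Algebra R A₂] {a a' : A₁} {b b' : A₂} (h1 : Commute a a') (h2 : Commute b b') :
    Commute (a ⊗ₜ[R] b) (a' ⊗ₜ[R] b') := by
  unfold Commute SemiconjBy
  rw [Algebra.TensorProduct.tmul_mul_tmul, Algebra.TensorProduct.tmul_mul_tmul,
    h1.eq, h2.eq]

lemma eOm_mul_self (M : CoxeterMatrix B) (b : B) :
    eOm k M b * eOm k M b = eOm k M b := by
  rw [eOm, ← map_mul]
  exact RingQuot.mkRingHom_rel (OmegaRel.e_idem b)

lemma one_sub_eOm_mul_self (M : CoxeterMatrix B) (b : B) :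
    (1 - eOm k M b) * (1 - eOm k M b) = 1 - eOm k M b := by
  rw [sub_mul, one_mul, mul_sub, mul_one, eOm_mul_self k M b, sub_self, sub_zero]

lemma EOm_mul_self [Fintype B] [DecidableEq B] (M : CoxeterMatrix B) (I : Finset B) :
    EOm k M I * EOm k M I = EOm k M I := by
  rw [EOm]
  refine mul_mul_idem ?_ ?_ ?_
  · exact noncommProd_idem _ _ (commute_eOm k M) (eOm_mul_self k M)
  · exact noncommProd_idem _ _ (commute_oneSubEOm k M) (one_sub_eOm_mul_self k M)
  · refine Finset.noncommProd_commute _ _ _ _ (fun x _ => ?_)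
    exact (Finset.noncommProd_commute _ _ _ _
      (fun y _ => (Commute.one_left _).sub_left (commute_eOm k M x y))).symm

lemma sum_EOm_eq_one [Fintype B] [DecidableEq B] (M : CoxeterMatrix B) :
    ∑ I : Finset B, EOm k M I = 1 := by
  have h := sum_E_powerset (fun b => eOm k M b) (commute_eOm k M) (Finset.univ : Finset B)
  rw [Finset.powerset_univ] at h
  rw [← h]
  refine Finset.sum_congr rfl (fun K _ => ?_)
  rw [EOm]
  congr 1

/-! ### Membership lemmas for `fjoin`, `part1`, `part2` -/

@[simp] lemma inl_mem_fjoin [DecidableEq B₁] [DecidableEq B₂] {I : Finset B₁}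
    {K : Finset B₂} {b : B₁} : Sum.inl b ∈ fjoin I K ↔ b ∈ I := by
  simp [fjoin]

@[simp] lemma inr_mem_fjoin [DecidableEq B₁] [DecidableEq B₂] {I : Finset B₁}
    {K : Finset B₂} {b : B₂} : Sum.inr b ∈ fjoin I K ↔ b ∈ K := by
  simp [fjoin]

@[simp] lemma mem_part1 {I : Finset (B₁ ⊕ B₂)} {b : B₁} :
    b ∈ part1 I ↔ Sum.inl b ∈ I := by
  simp [part1]

@[simp] lemma mem_part2 {I : Finset (B₁ ⊕ B₂)} {b : B₂} :
    b ∈ part2 I ↔ Sum.inr b ∈ I := by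
  simp [part2]

lemma fjoin_part [DecidableEq B₁] [DecidableEq B₂] (I : Finset (B₁ ⊕ B₂)) :
    fjoin (part1 I) (part2 I) = I := by
  ext x
  rcases x with b | b <;> simp

lemma compl_fjoin [Fintype B₁] [Fintype B₂] [DecidableEq B₁] [DecidableEq B₂]
    (I : Finset B₁) (K : Finset B₂) : (fjoin I K)ᶜ = fjoin Iᶜ Kᶜ := by
  ext x
  rcases x with b | b <;> simp

lemma noncommProd_tmul_left {R A₁ A₂ : Type*} [CommRing R] [Ring A₁] [Ring A₂]
    [Algebra R A₁] [Algebra R A₂] {α : Type*} [DecidableEq α] (s : Finset α)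
    (f : α → A₁) (hcomm : ∀ x y, Commute (f x) (f y)) :
    s.noncommProd (fun a => f a ⊗ₜ[R] (1 : A₂))
        (fun _ _ _ _ _ => commute_tmul (hcomm _ _) (Commute.one_left _)) =
      (s.noncommProd f (fun _ _ _ _ _ => hcomm _ _)) ⊗ₜ[R] 1 := by
  induction s using Finset.induction_on with
  | empty =>
    erw [Finset.noncommProd_empty, Finset.noncommProd_empty]
    rw [Algebra.TensorProduct.one_def]
  | @insert a s ha ih =>
    erw [Finset.noncommProd_insert_of_notMem _ _ _ _ ha,
      Finset.noncommProd_insert_of_notMem _ _ _ _ ha, ih,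
      Algebra.TensorProduct.tmul_mul_tmul, one_mul]

lemma noncommProd_tmul_right {R A₁ A₂ : Type*} [CommRing R] [Ring A₁] [Ring A₂]
    [Algebra R A₁] [Algebra R A₂] {α : Type*} [DecidableEq α] (s : Finset α)
    (f : α → A₂) (hcomm : ∀ x y, Commute (f x) (f y)) :
    s.noncommProd (fun a => (1 : A₁) ⊗ₜ[R] f a)
        (fun _ _ _ _ _ => commute_tmul (Commute.one_left _) (hcomm _ _)) =
      (1 : A₁) ⊗ₜ[R] (s.noncommProd f (fun _ _ _ _ _ => hcomm _ _)) := by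
  induction s using Finset.induction_on with
  | empty =>
    erw [Finset.noncommProd_empty, Finset.noncommProd_empty]
    rw [Algebra.TensorProduct.one_def]
  | @insert a s ha ih =>
    erw [Finset.noncommProd_insert_of_notMem _ _ _ _ ha,
      Finset.noncommProd_insert_of_notMem _ _ _ _ ha, ih,
      Algebra.TensorProduct.tmul_mul_tmul, one_mul]

lemma elim_tmul_comm {R A₁ A₂ : Type*} [CommRing R] [Ring A₁] [Ring A₂]
    [Algebra R A₁] [Algebra R A₂] {B₁ B₂ : Type*} (f₁ : B₁ → A₁) (f₂ : B₂ → A₂)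
    (h1 : ∀ x y, Commute (f₁ x) (f₁ y)) (h2 : ∀ x y, Commute (f₂ x) (f₂ y)) :
    ∀ x y : B₁ ⊕ B₂,
      Commute (Sum.elim (fun b => f₁ b ⊗ₜ[R] (1 : A₂)) (fun b => (1 : A₁) ⊗ₜ[R] f₂ b) x)
        (Sum.elim (fun b => f₁ b ⊗ₜ[R] (1 : A₂)) (fun b => (1 : A₁) ⊗ₜ[R] f₂ b) y) := by
  rintro (x | x) (y | y) <;> simp only [Sum.elim_inl, Sum.elim_inr]
  · exact commute_tmul (h1 x y) (Commute.refl 1)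
  · exact commute_tmul (Commute.one_right _) (Commute.one_left _)
  · exact commute_tmul (Commute.one_left _) (Commute.one_right _)
  · exact commute_tmul (Commute.refl 1) (h2 x y)

lemma noncommProd_fjoin_tensor {R A₁ A₂ : Type*} [CommRing R] [Ring A₁] [Ring A₂]
    [Algebra R A₁] [Algebra R A₂] {B₁ B₂ : Type*} [DecidableEq B₁] [DecidableEq B₂]
    (I : Finset B₁) (K : Finset B₂) (f₁ : B₁ → A₁) (f₂ : B₂ → A₂)
    (h1 : ∀ x y, Commute (f₁ x) (f₁ y)) (h2 : ∀ x y, Commute (f₂ x) (f₂ y)) :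
    (fjoin I K).noncommProd
        (Sum.elim (fun b => f₁ b ⊗ₜ[R] (1 : A₂)) (fun b => (1 : A₁) ⊗ₜ[R] f₂ b))
        (fun _ _ _ _ _ => elim_tmul_comm f₁ f₂ h1 h2 _ _) =
      (I.noncommProd f₁ (fun _ _ _ _ _ => h1 _ _)) ⊗ₜ[R]
        (K.noncommProd f₂ (fun _ _ _ _ _ => h2 _ _)) := by
  rw [noncommProd_fjoin _ _ _ (elim_tmul_comm f₁ f₂ h1 h2)]
  simp only [Sum.elim_inl, Sum.elim_inr]
  rw [noncommProd_tmul_left _ _ h1, noncommProd_tmul_right _ _ h2,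
    Algebra.TensorProduct.tmul_mul_tmul, one_mul, mul_one]

/-! ### `prodMatrix` values -/

@[simp] lemma prodMatrix_inl_inl (M₁ : CoxeterMatrix B₁) (M₂ : CoxeterMatrix B₂)
    (a b : B₁) : prodMatrix M₁ M₂ (Sum.inl a) (Sum.inl b) = M₁ a b := rfl

@[simp] lemma prodMatrix_inr_inr (M₁ : CoxeterMatrix B₁) (M₂ : CoxeterMatrix B₂)
    (a b : B₂) : prodMatrix M₁ M₂ (Sum.inr a) (Sum.inr b) = M₂ a b := rfl

@[simp] lemma prodMatrix_inl_inr (M₁ : CoxeterMatrix B₁) (M₂ : CoxeterMatrix B₂)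
    (a : B₁) (b : B₂) : prodMatrix M₁ M₂ (Sum.inl a) (Sum.inr b) = 2 := rfl

@[simp] lemma prodMatrix_inr_inl (M₁ : CoxeterMatrix B₁) (M₂ : CoxeterMatrix B₂)
    (a : B₂) (b : B₁) : prodMatrix M₁ M₂ (Sum.inr a) (Sum.inl b) = 2 := rfl

/-! ### Transversality transfer -/

lemma transversal_of_inl {M₁ : CoxeterMatrix B₁} {M₂ : CoxeterMatrix B₂}
    [DecidableEq B₁] [DecidableEq B₂] {I J : Finset (B₁ ⊕ B₂)} {s : B₁}
    (h : Transversal (prodMatrix M₁ M₂) I J) (hs : Sum.inl s ∈ I \ J) :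
    part2 I = part2 J ∧ Transversal M₁ (part1 I) (part1 J) ∧
      s ∈ part1 I \ part1 J := by
  obtain ⟨⟨_, hM⟩, hne'⟩ := h
  have hJI : ∀ x ∈ J \ I, ∃ b : B₁, x = Sum.inl b := by
    rintro (b | c) hx
    · exact ⟨b, rfl⟩
    · exact absurd rfl (hM _ hs _ hx)
  obtain ⟨x₀, hx₀⟩ := hne'
  obtain ⟨b₀, rfl⟩ := hJI x₀ hx₀
  have hIJ : ∀ x ∈ I \ J, ∃ b : B₁, x = Sum.inl b := by
    rintro (b | c) hx
    · exact ⟨b, rfl⟩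
    · exact absurd rfl (hM _ hx _ hx₀)
  refine ⟨?_, ⟨⟨⟨s, ?_⟩, ?_⟩, ⟨b₀, ?_⟩⟩, ?_⟩
  · ext c
    simp only [mem_part2]
    constructor
    · intro hc
      by_contra hc'
      obtain ⟨b, hb⟩ := hIJ _ (Finset.mem_sdiff.2 ⟨hc, hc'⟩)
      exact Sum.inr_ne_inl hb
    · intro hc
      by_contra hc'
      obtain ⟨b, hb⟩ := hJI _ (Finset.mem_sdiff.2 ⟨hc, hc'⟩)
      exact Sum.inr_ne_inl hb
  · rw [Finset.mem_sdiff] at hs ⊢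
    simpa using hs
  · intro a ha b hb
    rw [Finset.mem_sdiff] at ha hb
    simp only [mem_part1] at ha hb
    have := hM (Sum.inl a) (Finset.mem_sdiff.2 ha) (Sum.inl b) (Finset.mem_sdiff.2 hb)
    simpa using this
  · rw [Finset.mem_sdiff] at hx₀ ⊢
    simpa using hx₀
  · rw [Finset.mem_sdiff] at hs ⊢
    simpa using hs

lemma transversal_of_inr {M₁ : CoxeterMatrix B₁} {M₂ : CoxeterMatrix B₂}
    [DecidableEq B₁] [DecidableEq B₂] {I J : Finset (B₁ ⊕ B₂)} {s : B₂}
    (h : Transversal (prodMatrix M₁ M₂) I J) (hs : Sum.inr s ∈ I \ J) :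
    part1 I = part1 J ∧ Transversal M₂ (part2 I) (part2 J) ∧
      s ∈ part2 I \ part2 J := by
  obtain ⟨⟨_, hM⟩, hne'⟩ := h
  have hJI : ∀ x ∈ J \ I, ∃ b : B₂, x = Sum.inr b := by
    rintro (c | b) hx
    · exact absurd rfl (hM _ hs _ hx)
    · exact ⟨b, rfl⟩
  obtain ⟨x₀, hx₀⟩ := hne'
  obtain ⟨b₀, rfl⟩ := hJI x₀ hx₀
  have hIJ : ∀ x ∈ I \ J, ∃ b : B₂, x = Sum.inr b := by
    rintro (c | b) hx
    · exact absurd rfl (hM _ hx _ hx₀)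
    · exact ⟨b, rfl⟩
  refine ⟨?_, ⟨⟨⟨s, ?_⟩, ?_⟩, ⟨b₀, ?_⟩⟩, ?_⟩
  · ext c
    simp only [mem_part1]
    constructor
    · intro hc
      by_contra hc'
      obtain ⟨b, hb⟩ := hIJ _ (Finset.mem_sdiff.2 ⟨hc, hc'⟩)
      exact Sum.inl_ne_inr hb
    · intro hc
      by_contra hc'
      obtain ⟨b, hb⟩ := hJI _ (Finset.mem_sdiff.2 ⟨hc, hc'⟩)
      exact Sum.inl_ne_inr hb
  · rw [Finset.mem_sdiff] at hs ⊢
    simpa using hs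
  · intro a ha b hb
    rw [Finset.mem_sdiff] at ha hb
    simp only [mem_part2] at ha hb
    have := hM (Sum.inr a) (Finset.mem_sdiff.2 ha) (Sum.inr b) (Finset.mem_sdiff.2 hb)
    simpa using this
  · rw [Finset.mem_sdiff] at hx₀ ⊢
    simpa using hx₀
  · rw [Finset.mem_sdiff] at hs ⊢
    simpa using hs

lemma transversal_fjoin_left {M₁ : CoxeterMatrix B₁} {M₂ : CoxeterMatrix B₂}
    [DecidableEq B₁] [DecidableEq B₂] {I J : Finset B₁} (K : Finset B₂)
    (h : Transversal M₁ I J) :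
    Transversal (prodMatrix M₁ M₂) (fjoin I K) (fjoin J K) := by
  obtain ⟨⟨⟨s, hs⟩, hM⟩, hne'⟩ := h
  have hmem : ∀ x, x ∈ fjoin I K \ fjoin J K ↔ ∃ b ∈ I \ J, x = Sum.inl b := by
    rintro (b | c)
    · simp [Finset.mem_sdiff]
    · simp [Finset.mem_sdiff]
  have hmem' : ∀ x, x ∈ fjoin J K \ fjoin I K ↔ ∃ b ∈ J \ I, x = Sum.inl b := by
    rintro (b | c)
    · simp [Finset.mem_sdiff]
    · simp [Finset.mem_sdiff]
  refine ⟨⟨⟨Sum.inl s, (hmem _).2 ⟨s, hs, rfl⟩⟩, ?_⟩, ?_⟩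
  · intro x hx y hy
    obtain ⟨b, hb, rfl⟩ := (hmem x).1 hx
    obtain ⟨b', hb', rfl⟩ := (hmem' y).1 hy
    simpa using hM b hb b' hb'
  · obtain ⟨u, hu⟩ := hne'
    exact ⟨Sum.inl u, (hmem' _).2 ⟨u, hu, rfl⟩⟩

lemma transversal_fjoin_right {M₁ : CoxeterMatrix B₁} {M₂ : CoxeterMatrix B₂}
    [DecidableEq B₁] [DecidableEq B₂] {I J : Finset B₂} (K : Finset B₁)
    (h : Transversal M₂ I J) :
    Transversal (prodMatrix M₁ M₂) (fjoin K I) (fjoin K J) := by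
  obtain ⟨⟨⟨s, hs⟩, hM⟩, hne'⟩ := h
  have hmem : ∀ x, x ∈ fjoin K I \ fjoin K J ↔ ∃ b ∈ I \ J, x = Sum.inr b := by
    rintro (b | c)
    · simp [Finset.mem_sdiff]
    · simp [Finset.mem_sdiff]
  have hmem' : ∀ x, x ∈ fjoin K J \ fjoin K I ↔ ∃ b ∈ J \ I, x = Sum.inr b := by
    rintro (b | c)
    · simp [Finset.mem_sdiff]
    · simp [Finset.mem_sdiff]
  refine ⟨⟨⟨Sum.inr s, (hmem _).2 ⟨s, hs, rfl⟩⟩, ?_⟩, ?_⟩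
  · intro x hx y hy
    obtain ⟨b, hb, rfl⟩ := (hmem x).1 hx
    obtain ⟨b', hb', rfl⟩ := (hmem' y).1 hy
    simpa using hM b hb b' hb'
  · obtain ⟨u, hu⟩ := hne'
    exact ⟨Sum.inr u, (hmem' _).2 ⟨u, hu, rfl⟩⟩

section Tau

variable [Fintype B₁] [Fintype B₂]
variable (t : Omega k (prodMatrix M₁ M₂) →+* Omega k M₁ ⊗[k] Omega k M₂)

lemma t_EOm (ht : TauCond k M₁ M₂ ⇑t) (I : Finset B₁) (K : Finset B₂) :
    t (EOm k (prodMatrix M₁ M₂) (fjoin I K)) = EOm k M₁ I ⊗ₜ[k] EOm k M₂ K := by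
  have hP : t ((fjoin I K).noncommProd (fun b => eOm k (prodMatrix M₁ M₂) b)
      (fun _ _ _ _ _ => commute_eOm k _ _ _)) =
      (I.noncommProd (fun b => eOm k M₁ b) (fun _ _ _ _ _ => commute_eOm k M₁ _ _)) ⊗ₜ[k]
        (K.noncommProd (fun b => eOm k M₂ b) (fun _ _ _ _ _ => commute_eOm k M₂ _ _)) := by
    erw [Finset.map_noncommProd]
    refine Eq.trans
      (Finset.noncommProd_congr rfl (fun x _ => ?_)
        (fun x _ y _ _ => (commute_eOm k (prodMatrix M₁ M₂) x y).map t))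
      (noncommProd_fjoin_tensor I K _ _ (commute_eOm k M₁) (commute_eOm k M₂))
    rcases x with b | b
    · exact (ht.1 b).1
    · exact (ht.2 b).1
  have hQ : t (((fjoin I K)ᶜ).noncommProd (fun b => 1 - eOm k (prodMatrix M₁ M₂) b)
      (fun _ _ _ _ _ => commute_oneSubEOm k _ _ _)) =
      ((Iᶜ).noncommProd (fun b => 1 - eOm k M₁ b)
          (fun _ _ _ _ _ => commute_oneSubEOm k M₁ _ _)) ⊗ₜ[k]
        ((Kᶜ).noncommProd (fun b => 1 - eOm k M₂ b)
          (fun _ _ _ _ _ => commute_oneSubEOm k M₂ _ _)) := by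
    erw [Finset.map_noncommProd]
    refine Eq.trans
      (Finset.noncommProd_congr (compl_fjoin I K) (fun x _ => ?_)
        (fun x _ y _ _ => (commute_oneSubEOm k (prodMatrix M₁ M₂) x y).map t))
      (noncommProd_fjoin_tensor Iᶜ Kᶜ _ _ (commute_oneSubEOm k M₁) (commute_oneSubEOm k M₂))
    rcases x with b | b
    · rw [map_sub, map_one, (ht.1 b).1, Sum.elim_inl, TensorProduct.sub_tmul,
        Algebra.TensorProduct.one_def]
    · rw [map_sub, map_one, (ht.2 b).1, Sum.elim_inr, TensorProduct.tmul_sub,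
        Algebra.TensorProduct.one_def]
  rw [EOm, map_mul, hP, hQ, Algebra.TensorProduct.tmul_mul_tmul, EOm, EOm]

lemma t_XOm_inl (ht : TauCond k M₁ M₂ ⇑t) (I J : Finset B₁) (K : Finset B₂) (s : B₁) :
    t (XOm k (prodMatrix M₁ M₂) (fjoin I K) (fjoin J K) (Sum.inl s)) =
      XOm k M₁ I J s ⊗ₜ[k] EOm k M₂ K := by
  rw [XOm, map_mul, map_mul, t_EOm k M₁ M₂ t ht, t_EOm k M₁ M₂ t ht, (ht.1 s).2,
    Algebra.TensorProduct.tmul_mul_tmul, mul_one,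
    Algebra.TensorProduct.tmul_mul_tmul, EOm_mul_self, XOm]

lemma t_XOm_inr (ht : TauCond k M₁ M₂ ⇑t) (I J : Finset B₂) (K : Finset B₁) (s : B₂) :
    t (XOm k (prodMatrix M₁ M₂) (fjoin K I) (fjoin K J) (Sum.inr s)) =
      EOm k M₁ K ⊗ₜ[k] XOm k M₂ I J s := by
  rw [XOm, map_mul, map_mul, t_EOm k M₁ M₂ t ht, t_EOm k M₁ M₂ t ht, (ht.2 s).2,
    Algebra.TensorProduct.tmul_mul_tmul, mul_one,
    Algebra.TensorProduct.tmul_mul_tmul, EOm_mul_self, XOm]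

lemma tmul_one_mem_map (ht : TauCond k M₁ M₂ ⇑t) :
    ∀ a ∈ Psi k M₁, (a ⊗ₜ[k] (1 : Omega k M₂)) ∈ (Psi k (prodMatrix M₁ M₂)).map t := by
  intro a ha
  induction ha using Subring.closure_induction with
  | mem g hg =>
    rcases hg with ⟨I, rfl⟩ | ⟨I, J, s, htr, hs, rfl⟩
    · refine ⟨∑ K : Finset B₂, EOm k (prodMatrix M₁ M₂) (fjoin I K),
        Subring.sum_mem _ (fun K _ => Subring.subset_closure (Or.inl ⟨_, rfl⟩)), ?_⟩
      calc t (∑ K : Finset B₂, EOm k (prodMatrix M₁ M₂) (fjoin I K))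
          = ∑ K : Finset B₂, t (EOm k (prodMatrix M₁ M₂) (fjoin I K)) := map_sum t _ _
        _ = ∑ K : Finset B₂, EOm k M₁ I ⊗ₜ[k] EOm k M₂ K :=
            Finset.sum_congr rfl (fun K _ => t_EOm k M₁ M₂ t ht I K)
        _ = EOm k M₁ I ⊗ₜ[k] ∑ K : Finset B₂, EOm k M₂ K :=
            (TensorProduct.tmul_sum _ _ _).symm
        _ = EOm k M₁ I ⊗ₜ[k] 1 := by rw [sum_EOm_eq_one]
    · have hdiff : ∀ K : Finset B₂, Sum.inl s ∈ fjoin I K \ fjoin J K := by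
        intro K
        rw [Finset.mem_sdiff] at hs ⊢
        simpa using hs
      refine ⟨∑ K : Finset B₂, XOm k (prodMatrix M₁ M₂) (fjoin I K) (fjoin J K) (Sum.inl s),
        Subring.sum_mem _ (fun K _ => Subring.subset_closure
          (Or.inr ⟨_, _, _, transversal_fjoin_left K htr, hdiff K, rfl⟩)), ?_⟩
      calc t (∑ K : Finset B₂, XOm k (prodMatrix M₁ M₂) (fjoin I K) (fjoin J K) (Sum.inl s))
          = ∑ K : Finset B₂,
              t (XOm k (prodMatrix M₁ M₂) (fjoin I K) (fjoin J K) (Sum.inl s)) := map_sum t _ _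
        _ = ∑ K : Finset B₂, XOm k M₁ I J s ⊗ₜ[k] EOm k M₂ K :=
            Finset.sum_congr rfl (fun K _ => t_XOm_inl k M₁ M₂ t ht I J K s)
        _ = XOm k M₁ I J s ⊗ₜ[k] ∑ K : Finset B₂, EOm k M₂ K :=
            (TensorProduct.tmul_sum _ _ _).symm
        _ = XOm k M₁ I J s ⊗ₜ[k] 1 := by rw [sum_EOm_eq_one]
  | zero => rw [TensorProduct.zero_tmul]; exact zero_mem _
  | one => rw [← Algebra.TensorProduct.one_def]; exact one_mem _
  | add x y hx hy ihx ihy => rw [TensorProduct.add_tmul]; exact add_mem ihx ihy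
  | neg x hx ihx => rw [TensorProduct.neg_tmul]; exact neg_mem ihx
  | mul x y hx hy ihx ihy =>
    rw [show (x * y) ⊗ₜ[k] (1 : Omega k M₂) =
        (x ⊗ₜ[k] (1 : Omega k M₂)) * (y ⊗ₜ[k] (1 : Omega k M₂)) by
      rw [Algebra.TensorProduct.tmul_mul_tmul, one_mul]]
    exact mul_mem ihx ihy
lemma one_tmul_mem_map (ht : TauCond k M₁ M₂ ⇑t) :
    ∀ b ∈ Psi k M₂, ((1 : Omega k M₁) ⊗ₜ[k] b) ∈ (Psi k (prodMatrix M₁ M₂)).map t := by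
  intro b hb
  induction hb using Subring.closure_induction with
  | mem g hg =>
    rcases hg with ⟨K, rfl⟩ | ⟨K, L, s, htr, hs, rfl⟩
    · refine ⟨∑ I : Finset B₁, EOm k (prodMatrix M₁ M₂) (fjoin I K),
        Subring.sum_mem _ (fun I _ => Subring.subset_closure (Or.inl ⟨_, rfl⟩)), ?_⟩
      calc t (∑ I : Finset B₁, EOm k (prodMatrix M₁ M₂) (fjoin I K))
          = ∑ I : Finset B₁, t (EOm k (prodMatrix M₁ M₂) (fjoin I K)) := map_sum t _ _
        _ = ∑ I : Finset B₁, EOm k M₁ I ⊗ₜ[k] EOm k M₂ K :=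
            Finset.sum_congr rfl (fun I _ => t_EOm k M₁ M₂ t ht I K)
        _ = (∑ I : Finset B₁, EOm k M₁ I) ⊗ₜ[k] EOm k M₂ K :=
            (TensorProduct.sum_tmul _ _ _).symm
        _ = (1 : Omega k M₁) ⊗ₜ[k] EOm k M₂ K := by rw [sum_EOm_eq_one]
    · have hdiff : ∀ I : Finset B₁, Sum.inr s ∈ fjoin I K \ fjoin I L := by
        intro I
        rw [Finset.mem_sdiff] at hs ⊢
        simpa using hs
      refine ⟨∑ I : Finset B₁, XOm k (prodMatrix M₁ M₂) (fjoin I K) (fjoin I L) (Sum.inr s),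
        Subring.sum_mem _ (fun I _ => Subring.subset_closure
          (Or.inr ⟨_, _, _, transversal_fjoin_right I htr, hdiff I, rfl⟩)), ?_⟩
      calc t (∑ I : Finset B₁, XOm k (prodMatrix M₁ M₂) (fjoin I K) (fjoin I L) (Sum.inr s))
          = ∑ I : Finset B₁,
              t (XOm k (prodMatrix M₁ M₂) (fjoin I K) (fjoin I L) (Sum.inr s)) := map_sum t _ _
        _ = ∑ I : Finset B₁, EOm k M₁ I ⊗ₜ[k] XOm k M₂ K L s :=
            Finset.sum_congr rfl (fun I _ => t_XOm_inr k M₁ M₂ t ht K L I s)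
        _ = (∑ I : Finset B₁, EOm k M₁ I) ⊗ₜ[k] XOm k M₂ K L s :=
            (TensorProduct.sum_tmul _ _ _).symm
        _ = (1 : Omega k M₁) ⊗ₜ[k] XOm k M₂ K L s := by rw [sum_EOm_eq_one]
  | zero => rw [TensorProduct.tmul_zero]; exact zero_mem _
  | one => rw [← Algebra.TensorProduct.one_def]; exact one_mem _
  | add x y hx hy ihx ihy => rw [TensorProduct.tmul_add]; exact add_mem ihx ihy
  | neg x hx ihx => rw [TensorProduct.tmul_neg]; exact neg_mem ihx
  | mul x y hx hy ihx ihy =>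
    rw [show (1 : Omega k M₁) ⊗ₜ[k] (x * y) =
        ((1 : Omega k M₁) ⊗ₜ[k] x) * ((1 : Omega k M₁) ⊗ₜ[k] y) by
      rw [Algebra.TensorProduct.tmul_mul_tmul, one_mul]]
    exact mul_mem ihx ihy

end Tau

end Statement7Aux

/-- `τ` maps the subalgebra `Ψ(W,S)` onto `Ψ(W₁,S₁) ⊗_ℤ Ψ(W₂,S₂)`
(the subring of `Ω₁ ⊗_ℤ Ω₂` generated by the pure tensors `a ⊗ b` with `a ∈ Ψ₁`,
`b ∈ Ψ₂`). -/
theorem statement7 {B₁ B₂ : Type*} [Fintype B₁] [DecidableEq B₁] [Fintype B₂]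
    [DecidableEq B₂] (M₁ : CoxeterMatrix B₁) (M₂ : CoxeterMatrix B₂)
    {W₁ W₂ : Type*} [Group W₁] [Group W₂] [Finite W₁] [Finite W₂]
    (cs₁ : CoxeterSystem M₁ W₁) (cs₂ : CoxeterSystem M₂ W₂)
    (cs : CoxeterSystem (prodMatrix M₁ M₂) (W₁ × W₂))
    (t : Omega ℤ (prodMatrix M₁ M₂) →+* Omega ℤ M₁ ⊗[ℤ] Omega ℤ M₂)
    (ht : TauCond ℤ M₁ M₂ ⇑t) :
    Subring.map t (Psi ℤ (prodMatrix M₁ M₂)) =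
      Subring.closure
        {z : Omega ℤ M₁ ⊗[ℤ] Omega ℤ M₂ |
          ∃ a ∈ Psi ℤ M₁, ∃ b ∈ Psi ℤ M₂, z = a ⊗ₜ[ℤ] b} := by
  classical
  apply le_antisymm
  · -- `τ(Ψ) ⊆ Ψ₁ ⊗ Ψ₂`
    rw [Psi, RingHom.map_closure, Subring.closure_le]
    rintro z ⟨a, ha, rfl⟩
    rcases ha with ⟨I, rfl⟩ | ⟨I, J, s, htr, hs, rfl⟩
    · refine Subring.subset_closure
        ⟨EOm ℤ M₁ (part1 I), Subring.subset_closure (Or.inl ⟨_, rfl⟩),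
          EOm ℤ M₂ (part2 I), Subring.subset_closure (Or.inl ⟨_, rfl⟩), ?_⟩
      conv_lhs => rw [← fjoin_part I]
      exact t_EOm ℤ M₁ M₂ t ht (part1 I) (part2 I)
    · rcases s with s | s
      · obtain ⟨hpart, htr', hs'⟩ := transversal_of_inl htr hs
        refine Subring.subset_closure
          ⟨XOm ℤ M₁ (part1 I) (part1 J) s,
            Subring.subset_closure (Or.inr ⟨_, _, s, htr', hs', rfl⟩),
            EOm ℤ M₂ (part2 I),
            Subring.subset_closure (Or.inl ⟨_, rfl⟩), ?_⟩
        have hI : I = fjoin (part1 I) (part2 I) := (fjoin_part I).symm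
        have hJ : J = fjoin (part1 J) (part2 I) := by rw [hpart, fjoin_part]
        conv_lhs => rw [hI, hJ]
        exact t_XOm_inl ℤ M₁ M₂ t ht (part1 I) (part1 J) (part2 I) s
      · obtain ⟨hpart, htr', hs'⟩ := transversal_of_inr htr hs
        refine Subring.subset_closure
          ⟨EOm ℤ M₁ (part1 I),
            Subring.subset_closure (Or.inl ⟨_, rfl⟩),
            XOm ℤ M₂ (part2 I) (part2 J) s,
            Subring.subset_closure (Or.inr ⟨_, _, s, htr', hs', rfl⟩), ?_⟩
        have hI : I = fjoin (part1 I) (part2 I) := (fjoin_part I).symm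
        have hJ : J = fjoin (part1 I) (part2 J) := by rw [hpart, fjoin_part]
        conv_lhs => rw [hI, hJ]
        exact t_XOm_inr ℤ M₁ M₂ t ht (part2 I) (part2 J) (part1 I) s
  · -- `Ψ₁ ⊗ Ψ₂ ⊆ τ(Ψ)`
    rw [Subring.closure_le]
    rintro z ⟨a, ha, b, hb, rfl⟩
    have hmul := mul_mem (tmul_one_mem_map ℤ M₁ M₂ t ht a ha)
      (one_tmul_mem_map ℤ M₁ M₂ t ht b hb)
    rwa [Algebra.TensorProduct.tmul_mul_tmul, one_mul, mul_one] at hmul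

end WGraphPaper

end
end

section
/- Let W = W₁ × W₂ be a finite Coxeter group with S = S₁ ⊔ S₂ and ι₁ : Ω₁ → Ω, ι₂ : Ω₂ → Ω the parabolic morphisms. Then [ι₁(a), ι₂(b)] = 0 in Ω for all a ∈ Ψ₁ = Ψ(W₁,S₁) and b ∈ Ψ₂ = Ψ(W₂,S₂), i.e. the images of Ψ₁ and Ψ₂ in Ω commute elementwise. -/
open scoped TensorProduct

noncomputable section

namespace WGraphPaper

variable (k : Type*) [CommRing k] {B B₁ B₂ : Type*}

variable [Fintype B] [DecidableEq B] [DecidableEq B₁] [DecidableEq B₂]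

variable (M₁ : CoxeterMatrix B₁) (M₂ : CoxeterMatrix B₂)

variable {ι : Type*}

variable [Fintype B] [DecidableEq B]

/-! ### Auxiliary lemmas for Statement 9 -/

section Stmt9Aux

variable {R₀ : Type*}

lemma lcoeff_add' [Semiring R₀] (p q : LaurentPolynomial R₀) (n : ℤ) :
    lcoeff (p + q) n = lcoeff p n + lcoeff q n := rfl

lemma lcoeff_sub' [Ring R₀] (p q : LaurentPolynomial R₀) (n : ℤ) :
    lcoeff (p - q) n = lcoeff p n - lcoeff q n := rfl

lemma lcoeff_single' [Semiring R₀] (m : ℤ) (a : R₀) (n : ℤ) :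
    lcoeff (AddMonoidAlgebra.single m a : LaurentPolynomial R₀) n = if m = n then a else 0 :=
  Finsupp.single_apply

variable {kk : Type*} [CommRing kk] {D : Type*}

lemma iotaT_eq (b : D) : iotaT kk b =
    AddMonoidAlgebra.single (-1) (-(eGen kk b)) + AddMonoidAlgebra.single 1 (1 - eGen kk b)
      + AddMonoidAlgebra.single 0 (xGen kk b) := by
  rw [iotaT]
  simp only [LaurentPolynomial.single_eq_C_mul_T, map_neg, map_sub, map_one,
    LaurentPolynomial.T_zero, mul_one]

lemma lcoeff_braid_neg_one (b b' : D) :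
    lcoeff (braidComm 2 (iotaT kk b) (iotaT kk b')) (-1) =
      (-(eGen kk b * xGen kk b') - xGen kk b * eGen kk b')
        - (-(eGen kk b' * xGen kk b) - xGen kk b' * eGen kk b) := by
  rw [braidComm]
  simp only [altProd, mul_one]
  rw [iotaT_eq, iotaT_eq]
  simp only [mul_add, add_mul, AddMonoidAlgebra.single_mul_single, lcoeff_sub', lcoeff_add',
    lcoeff_single']
  norm_num only
  simp only [neg_mul, mul_neg, neg_neg, one_smul, neg_smul, one_mul, if_true, if_false]
  abel

lemma lcoeff_braid_zero (b b' : D) :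
    lcoeff (braidComm 2 (iotaT kk b) (iotaT kk b')) 0 =
      (xGen kk b * xGen kk b' - xGen kk b' * xGen kk b)
        + (eGen kk b * eGen kk b' - eGen kk b' * eGen kk b)
        + (eGen kk b * eGen kk b' - eGen kk b' * eGen kk b) := by
  rw [braidComm]
  simp only [altProd, mul_one]
  rw [iotaT_eq, iotaT_eq]
  simp only [mul_add, add_mul, mul_sub, sub_mul, mul_one, one_mul,
    AddMonoidAlgebra.single_mul_single, lcoeff_sub', lcoeff_add', lcoeff_single']
  norm_num only
  simp only [neg_mul, mul_neg, neg_neg, one_smul, neg_smul, one_mul, if_true, if_false, mul_one]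
  abel

variable (kk) (N : CoxeterMatrix D)

lemma mk_eGen (b : D) :
    RingQuot.mkRingHom (OmegaRel kk N) (eGen kk b) = eOm kk N b := rfl

lemma mk_xGen (b : D) :
    RingQuot.mkRingHom (OmegaRel kk N) (xGen kk b) = xOm kk N b := rfl

lemma eOm_idem (b : D) : eOm kk N b * eOm kk N b = eOm kk N b := by
  rw [← mk_eGen, ← map_mul]
  exact RingQuot.mkRingHom_rel (OmegaRel.e_idem b)

lemma eOm_mul_xOm (b : D) : eOm kk N b * xOm kk N b = xOm kk N b := by
  rw [← mk_eGen, ← mk_xGen, ← map_mul]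
  exact RingQuot.mkRingHom_rel (OmegaRel.ex b)

lemma xOm_mul_eOm (b : D) : xOm kk N b * eOm kk N b = 0 := by
  rw [← mk_eGen, ← mk_xGen, ← map_mul, ← (map_zero (RingQuot.mkRingHom (OmegaRel kk N)))]
  exact RingQuot.mkRingHom_rel (OmegaRel.xe b)

lemma omeg_neg_mul (a b : Omega kk N) : -a * b = -(a * b) := neg_mul a b

lemma omeg_mul_neg (a b : Omega kk N) : a * -b = -(a * b) := mul_neg a b

/-- The `v⁻¹`-coefficient of the braid relation for `m b b' = 2`. -/
lemma braid_rel1 (b b' : D) (h2 : N b b' = 2) :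
    eOm kk N b * xOm kk N b' + xOm kk N b * eOm kk N b'
      = eOm kk N b' * xOm kk N b + xOm kk N b' * eOm kk N b := by
  have h0 := RingQuot.mkRingHom_rel
    (OmegaRel.braid (k := kk) (M := N) b b' (by rw [h2]; norm_num) (-1))
  rw [h2, lcoeff_braid_neg_one, map_zero] at h0
  simp only [map_sub, map_neg, map_add, map_mul, mk_eGen, mk_xGen] at h0
  rw [← sub_eq_zero, ← neg_eq_zero, ← h0]
  abel

/-- The `v⁰`-coefficient of the braid relation for `m b b' = 2`: the `x`'s commute. -/
lemma xOm_mul_xOm_comm (b b' : D) (h2 : N b b' = 2) :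
    xOm kk N b * xOm kk N b' = xOm kk N b' * xOm kk N b := by
  have h0 := RingQuot.mkRingHom_rel
    (OmegaRel.braid (k := kk) (M := N) b b' (by rw [h2]; norm_num) 0)
  rw [h2, lcoeff_braid_zero, map_zero] at h0
  simp only [map_sub, map_neg, map_add, map_mul, mk_eGen, mk_xGen] at h0
  rw [(commute_eOm kk N b b').eq] at h0
  simp only [sub_self, add_zero] at h0
  exact sub_eq_zero.mp h0

/-- `e_b x_{b'} e_b = x_{b'} e_b` when `m b b' = 2`. -/
lemma eOm_xOm_eOm (b b' : D) (h2 : N b b' = 2) :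
    eOm kk N b * (xOm kk N b' * eOm kk N b) = xOm kk N b' * eOm kk N b := by
  have h : eOm kk N b * (xOm kk N b' * eOm kk N b) + xOm kk N b * (eOm kk N b' * eOm kk N b)
      = eOm kk N b' * (xOm kk N b * eOm kk N b) + xOm kk N b' * (eOm kk N b * eOm kk N b) := by
    simpa only [add_mul, mul_assoc] using congrArg (· * eOm kk N b) (braid_rel1 kk N b b' h2)
  rw [xOm_mul_eOm, mul_zero, zero_add, eOm_idem, (commute_eOm kk N b' b).eq,
    ← mul_assoc (xOm kk N b), xOm_mul_eOm, zero_mul, add_zero] at h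
  exact h

/-- The absorption lemma with a trailing factor. -/
lemma eOm_xOm_eOm_cont (b b' : D) (h2 : N b b' = 2) (Z : Omega kk N) :
    eOm kk N b * (xOm kk N b' * (eOm kk N b * Z)) = xOm kk N b' * (eOm kk N b * Z) := by
  calc eOm kk N b * (xOm kk N b' * (eOm kk N b * Z))
      = (eOm kk N b * (xOm kk N b' * eOm kk N b)) * Z := by
        simp only [mul_assoc]
    _ = (xOm kk N b' * eOm kk N b) * Z := by rw [eOm_xOm_eOm kk N b b' h2]
    _ = xOm kk N b' * (eOm kk N b * Z) := by rw [mul_assoc]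

section Gprod

variable {C : Type*} [Fintype C] [DecidableEq C] (ν : C → D)

/-- The product `(∏_{c ∈ I} e_{ν c})(∏_{c ∉ I}(1 - e_{ν c}))` in `Ω`. -/
def gprod (I : Finset C) : Omega kk N :=
  (I.noncommProd (fun c => eOm kk N (ν c)) (fun _ _ _ _ _ => commute_eOm kk N _ _)) *
    ((Iᶜ).noncommProd (fun c => 1 - eOm kk N (ν c))
      (fun _ _ _ _ _ => commute_oneSubEOm kk N _ _))

lemma commute_eOm_gprod (a : D) (I : Finset C) : Commute (eOm kk N a) (gprod kk N ν I) := by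
  refine Commute.mul_right ?_ ?_
  · exact Finset.noncommProd_commute _ _ _ _ (fun c _ => commute_eOm kk N a (ν c))
  · exact Finset.noncommProd_commute _ _ _ _
      (fun c _ => (Commute.one_right _).sub_right (commute_eOm kk N a (ν c)))

lemma commute_gprod_of {z : Omega kk N} (h : ∀ c : C, Commute z (eOm kk N (ν c)))
    (I : Finset C) : Commute z (gprod kk N ν I) := by
  refine Commute.mul_right ?_ ?_
  · exact Finset.noncommProd_commute _ _ _ _ (fun c _ => h c)
  · exact Finset.noncommProd_commute _ _ _ _
      (fun c _ => (Commute.one_right _).sub_right (h c))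

lemma eOm_mul_gprod_mem {c : C} {I : Finset C} (hc : c ∈ I) :
    eOm kk N (ν c) * gprod kk N ν I = gprod kk N ν I := by
  rw [gprod, ← mul_assoc]
  congr 1
  rw [← Finset.mul_noncommProd_erase I hc (fun c => eOm kk N (ν c))
    (fun _ _ _ _ _ => commute_eOm kk N _ _), ← mul_assoc, eOm_idem]

lemma gprod_mul_eOm_mem {c : C} {I : Finset C} (hc : c ∈ I) :
    gprod kk N ν I * eOm kk N (ν c) = gprod kk N ν I := by
  rw [← (commute_eOm_gprod kk N ν (ν c) I).eq, eOm_mul_gprod_mem kk N ν hc]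

lemma eOm_mul_gprod_not_mem {c : C} {I : Finset C} (hc : c ∉ I) :
    eOm kk N (ν c) * gprod kk N ν I = 0 := by
  have hc' : c ∈ Iᶜ := Finset.mem_compl.mpr hc
  rw [gprod, ← Finset.mul_noncommProd_erase Iᶜ hc' (fun c => 1 - eOm kk N (ν c))
    (fun _ _ _ _ _ => commute_oneSubEOm kk N _ _)]
  have hcomm : Commute (eOm kk N (ν c)) (I.noncommProd (fun c => eOm kk N (ν c))
      (fun _ _ _ _ _ => commute_eOm kk N _ _)) :=
    Finset.noncommProd_commute _ _ _ _ (fun d _ => commute_eOm kk N _ _)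
  rw [← mul_assoc, hcomm.eq, mul_assoc, ← mul_assoc (eOm kk N (ν c)), mul_one_sub, eOm_idem,
    sub_self, zero_mul, mul_zero]

lemma gprod_mul_eOm_not_mem {c : C} {I : Finset C} (hc : c ∉ I) :
    gprod kk N ν I * eOm kk N (ν c) = 0 := by
  rw [← (commute_eOm_gprod kk N ν (ν c) I).eq, eOm_mul_gprod_not_mem kk N ν hc]

/-- Key vanishing: `G_I x_a G_J = 0` when `J ∖ I ≠ ∅` and `a` is "orthogonal" to `ν`. -/
lemma gprod_xOm_gprod_eq_zero {I J : Finset C} {a : D} (h2 : ∀ c : C, N (ν c) a = 2)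
    (hne : (J \ I).Nonempty) :
    gprod kk N ν I * (xOm kk N a * gprod kk N ν J) = 0 := by
  obtain ⟨c, hc⟩ := hne
  rw [Finset.mem_sdiff] at hc
  rw [← eOm_mul_gprod_mem kk N ν hc.1, ← eOm_xOm_eOm_cont kk N (ν c) a (h2 c), ← mul_assoc,
    gprod_mul_eOm_not_mem kk N ν hc.2, zero_mul]


/-- A transversal edge element commutes with each orthogonal `e_a`. -/
lemma commute_gxg_eOm {I J : Finset C} {s : C} (hsI : s ∈ I) (hsJ : s ∉ J)
    (hne : (J \ I).Nonempty) {a : D} (h2 : ∀ c : C, N (ν c) a = 2) :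
    Commute (gprod kk N ν I * (xOm kk N (ν s) * gprod kk N ν J)) (eOm kk N a) := by
  have hA : (gprod kk N ν I * (xOm kk N (ν s) * gprod kk N ν J)) * eOm kk N a
      = gprod kk N ν I * ((xOm kk N (ν s) * eOm kk N a) * gprod kk N ν J) := by
    rw [mul_assoc, mul_assoc, ← (commute_eOm_gprod kk N ν a J).eq, ← mul_assoc (xOm kk N (ν s))]
  have hB : eOm kk N a * (gprod kk N ν I * (xOm kk N (ν s) * gprod kk N ν J))
      = gprod kk N ν I * ((eOm kk N a * xOm kk N (ν s)) * gprod kk N ν J) := by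
    rw [← mul_assoc, (commute_eOm_gprod kk N ν a I).eq, mul_assoc, ← mul_assoc (eOm kk N a)]
  have hr : xOm kk N (ν s) * eOm kk N a = eOm kk N a * xOm kk N (ν s)
      + (xOm kk N a * eOm kk N (ν s) - eOm kk N (ν s) * xOm kk N a) := by
    have h := braid_rel1 kk N (ν s) a (h2 s)
    rw [← sub_eq_zero] at h ⊢
    rw [← h]; abel
  have k1 : gprod kk N ν I * ((xOm kk N a * eOm kk N (ν s)) * gprod kk N ν J) = 0 := by
    rw [mul_assoc, eOm_mul_gprod_not_mem kk N ν hsJ, mul_zero, mul_zero]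
  have k2 : gprod kk N ν I * ((eOm kk N (ν s) * xOm kk N a) * gprod kk N ν J) = 0 := by
    rw [mul_assoc, ← mul_assoc (gprod kk N ν I), gprod_mul_eOm_mem kk N ν hsI,
      gprod_xOm_gprod_eq_zero kk N ν h2 hne]
  show _ = _
  rw [hA, hB, hr, add_mul, sub_mul, mul_add, mul_sub, k1, k2]
  simp

section TwoSides

variable {C₁ C₂ : Type*} [Fintype C₁] [DecidableEq C₁] [Fintype C₂] [DecidableEq C₂]
variable (ν₁ : C₁ → D) (ν₂ : C₂ → D)

/-- The generators `e_{ν₂ d}, x_{ν₂ d}` of the second parabolic. -/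
def R2gens : Set (Omega kk N) :=
  {w | ∃ d, w = eOm kk N (ν₂ d)} ∪ {w | ∃ d, w = xOm kk N (ν₂ d)}

lemma good_comm_mul {s'' : D} {w Z : Omega kk N} (hw : Commute (eOm kk N s'') w)
    (hZ : eOm kk N s'' * Z = Z) : eOm kk N s'' * (w * Z) = w * Z := by
  rw [← mul_assoc, hw.eq, mul_assoc, hZ]

lemma good_xmul {s'' d : D} (h2 : N s'' d = 2) {Z : Omega kk N}
    (hZ : eOm kk N s'' * Z = Z) : eOm kk N s'' * (xOm kk N d * Z) = xOm kk N d * Z := by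
  rw [← hZ]
  exact eOm_xOm_eOm_cont kk N s'' d h2 Z

lemma good_machine (hm : ∀ (c : C₁) (d : C₂), N (ν₁ c) (ν₂ d) = 2) (s s'' : C₁)
    {z : Omega kk N} (hz : z ∈ Subring.closure (R2gens kk N ν₂)) :
    (∀ Z : Omega kk N, eOm kk N (ν₁ s'') * Z = Z → eOm kk N (ν₁ s'') * (z * Z) = z * Z) ∧
      (∀ Z : Omega kk N, eOm kk N (ν₁ s'') * Z = Z →
        eOm kk N (ν₁ s'') * ((xOm kk N (ν₁ s) * z - z * xOm kk N (ν₁ s)) * Z)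
          = (xOm kk N (ν₁ s) * z - z * xOm kk N (ν₁ s)) * Z) := by
  induction hz using Subring.closure_induction with
  | mem w hw =>
    rcases hw with ⟨d, rfl⟩ | ⟨d, rfl⟩
    · constructor
      · intro Z hZ
        exact good_comm_mul kk N (commute_eOm kk N _ _) hZ
      · intro Z hZ
        have hr : xOm kk N (ν₁ s) * eOm kk N (ν₂ d) - eOm kk N (ν₂ d) * xOm kk N (ν₁ s)
            = xOm kk N (ν₂ d) * eOm kk N (ν₁ s) - eOm kk N (ν₁ s) * xOm kk N (ν₂ d) := by
          have h := braid_rel1 kk N (ν₁ s) (ν₂ d) (hm s d)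
          rw [← sub_eq_zero] at h ⊢
          rw [← h]; abel
        rw [hr, sub_mul, mul_assoc, mul_assoc, mul_sub]
        have g1 : eOm kk N (ν₁ s'') * (xOm kk N (ν₂ d) * (eOm kk N (ν₁ s) * Z))
            = xOm kk N (ν₂ d) * (eOm kk N (ν₁ s) * Z) :=
          good_xmul kk N (hm s'' d) (good_comm_mul kk N (commute_eOm kk N _ _) hZ)
        have g2 : eOm kk N (ν₁ s'') * (eOm kk N (ν₁ s) * (xOm kk N (ν₂ d) * Z))
            = eOm kk N (ν₁ s) * (xOm kk N (ν₂ d) * Z) :=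
          good_comm_mul kk N (commute_eOm kk N _ _) (good_xmul kk N (hm s'' d) hZ)
        rw [g1, g2]
    · constructor
      · intro Z hZ
        exact good_xmul kk N (hm s'' d) hZ
      · intro Z hZ
        rw [xOm_mul_xOm_comm kk N (ν₁ s) (ν₂ d) (hm s d), sub_self, zero_mul, mul_zero]
  | zero =>
    constructor
    · intro Z hZ; simp
    · intro Z hZ; simp
  | one =>
    constructor
    · intro Z hZ; rw [one_mul, hZ]
    · intro Z hZ; rw [mul_one, one_mul, sub_self, zero_mul, mul_zero]
  | add z₁ z₂ hz₁ hz₂ ih₁ ih₂ =>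
    constructor
    · intro Z hZ
      rw [add_mul, mul_add, ih₁.1 Z hZ, ih₂.1 Z hZ]
    · intro Z hZ
      have key : (xOm kk N (ν₁ s) * (z₁ + z₂) - (z₁ + z₂) * xOm kk N (ν₁ s)) * Z
          = (xOm kk N (ν₁ s) * z₁ - z₁ * xOm kk N (ν₁ s)) * Z
            + (xOm kk N (ν₁ s) * z₂ - z₂ * xOm kk N (ν₁ s)) * Z := by
        simp only [mul_add, add_mul, sub_mul, mul_sub, mul_assoc]; abel
      rw [key, mul_add, ih₁.2 Z hZ, ih₂.2 Z hZ]
  | neg z₁ hz₁ ih =>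
    constructor
    · intro Z hZ
      rw [omeg_neg_mul, omeg_mul_neg, ih.1 Z hZ]
    · intro Z hZ
      have key : (xOm kk N (ν₁ s) * (-z₁) - (-z₁) * xOm kk N (ν₁ s)) * Z
          = -((xOm kk N (ν₁ s) * z₁ - z₁ * xOm kk N (ν₁ s)) * Z) := by
        rw [omeg_mul_neg, omeg_neg_mul]
        have h2 : -(xOm kk N (ν₁ s) * z₁) - -(z₁ * xOm kk N (ν₁ s))
            = -(xOm kk N (ν₁ s) * z₁ - z₁ * xOm kk N (ν₁ s)) := by abel
        rw [h2, omeg_neg_mul]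
      rw [key, omeg_mul_neg, ih.2 Z hZ]
  | mul z₁ z₂ hz₁ hz₂ ih₁ ih₂ =>
    constructor
    · intro Z hZ
      rw [mul_assoc]
      exact ih₁.1 _ (ih₂.1 Z hZ)
    · intro Z hZ
      have key : (xOm kk N (ν₁ s) * (z₁ * z₂) - z₁ * z₂ * xOm kk N (ν₁ s)) * Z
          = (xOm kk N (ν₁ s) * z₁ - z₁ * xOm kk N (ν₁ s)) * (z₂ * Z)
            + z₁ * ((xOm kk N (ν₁ s) * z₂ - z₂ * xOm kk N (ν₁ s)) * Z) := by
        simp only [mul_add, add_mul, sub_mul, mul_sub, mul_assoc]; abel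
      rw [key, mul_add, ih₁.2 (z₂ * Z) (ih₂.1 Z hZ), ih₁.1 _ (ih₂.2 Z hZ)]

lemma gprod_mem_closure (K : Finset C₂) :
    gprod kk N ν₂ K ∈ Subring.closure (R2gens kk N ν₂) := by
  refine mul_mem ?_ ?_
  · refine Submonoid.noncommProd_mem _ _ _ _ (fun d _ => ?_)
    exact Subring.subset_closure (Or.inl ⟨d, rfl⟩)
  · refine Submonoid.noncommProd_mem _ _ _ _ (fun d _ => ?_)
    show (1 - eOm kk N (ν₂ d)) ∈ Subring.closure (R2gens kk N ν₂)
    exact sub_mem (one_mem _) (Subring.subset_closure (Or.inl ⟨d, rfl⟩))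

lemma X2_mem_closure (K L : Finset C₂) (t : C₂) :
    gprod kk N ν₂ K * (xOm kk N (ν₂ t) * gprod kk N ν₂ L)
      ∈ Subring.closure (R2gens kk N ν₂) := by
  exact mul_mem (gprod_mem_closure kk N ν₂ K)
    (mul_mem (Subring.subset_closure (Or.inr ⟨t, rfl⟩)) (gprod_mem_closure kk N ν₂ L))

/-- The main commutation: two transversal edge elements in orthogonal parabolics commute. -/
lemma main_commute (hm : ∀ (c : C₁) (d : C₂), N (ν₁ c) (ν₂ d) = 2)
    {I J : Finset C₁} {K L : Finset C₂} {s : C₁} {t : C₂}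
    (hsI : s ∈ I) (hsJ : s ∉ J) (hJI : (J \ I).Nonempty)
    (htK : t ∈ K) (htL : t ∉ L) (hLK : (L \ K).Nonempty) :
    Commute (gprod kk N ν₁ I * (xOm kk N (ν₁ s) * gprod kk N ν₁ J))
      (gprod kk N ν₂ K * (xOm kk N (ν₂ t) * gprod kk N ν₂ L)) := by
  have hm' : ∀ (d : C₂) (c : C₁), N (ν₂ d) (ν₁ c) = 2 :=
    fun d c => (N.symmetric _ _).trans (hm c d)
  set X2 := gprod kk N ν₂ K * (xOm kk N (ν₂ t) * gprod kk N ν₂ L) with hX2def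
  have hX2e : ∀ c : C₁, Commute X2 (eOm kk N (ν₁ c)) :=
    fun c => commute_gxg_eOm kk N ν₂ htK htL hLK (fun d => hm' d c)
  have hX2I : Commute X2 (gprod kk N ν₁ I) := commute_gprod_of kk N ν₁ hX2e I
  have hX2J : Commute X2 (gprod kk N ν₁ J) := commute_gprod_of kk N ν₁ hX2e J
  obtain ⟨s'', hs''⟩ := hJI
  rw [Finset.mem_sdiff] at hs''
  have hGood : eOm kk N (ν₁ s'') * gprod kk N ν₁ J = gprod kk N ν₁ J :=
    eOm_mul_gprod_mem kk N ν₁ hs''.1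
  have hkey := (good_machine kk N ν₁ ν₂ hm s s'' (X2_mem_closure kk N ν₂ K L t)).2
    (gprod kk N ν₁ J) hGood
  have hkill : gprod kk N ν₁ I
      * ((xOm kk N (ν₁ s) * X2 - X2 * xOm kk N (ν₁ s)) * gprod kk N ν₁ J) = 0 := by
    rw [← hkey, ← mul_assoc, gprod_mul_eOm_not_mem kk N ν₁ hs''.2, zero_mul]
  have hmain : gprod kk N ν₁ I * ((xOm kk N (ν₁ s) * X2) * gprod kk N ν₁ J)
      = gprod kk N ν₁ I * ((X2 * xOm kk N (ν₁ s)) * gprod kk N ν₁ J) := by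
    rw [sub_mul, mul_sub, sub_eq_zero] at hkill
    exact hkill
  show _ = _
  calc (gprod kk N ν₁ I * (xOm kk N (ν₁ s) * gprod kk N ν₁ J)) * X2
      = gprod kk N ν₁ I * (xOm kk N (ν₁ s) * (gprod kk N ν₁ J * X2)) := by
        rw [mul_assoc, mul_assoc]
    _ = gprod kk N ν₁ I * ((xOm kk N (ν₁ s) * X2) * gprod kk N ν₁ J) := by
        rw [← hX2J.eq, ← mul_assoc (xOm kk N (ν₁ s))]
    _ = gprod kk N ν₁ I * ((X2 * xOm kk N (ν₁ s)) * gprod kk N ν₁ J) := hmain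
    _ = (gprod kk N ν₁ I * X2) * (xOm kk N (ν₁ s) * gprod kk N ν₁ J) := by
        simp only [mul_assoc]
    _ = X2 * (gprod kk N ν₁ I * (xOm kk N (ν₁ s) * gprod kk N ν₁ J)) := by
        rw [← hX2I.eq, mul_assoc]

end TwoSides

end Gprod

end Stmt9Aux


section Final

variable {B₁ B₂ : Type*} [Fintype B₁] [DecidableEq B₁] [Fintype B₂] [DecidableEq B₂]
variable (M₁ : CoxeterMatrix B₁) (M₂ : CoxeterMatrix B₂)

lemma map_EOm₁ (f₁ : Omega ℤ M₁ →+* Omega ℤ (prodMatrix M₁ M₂))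
    (h₁ : Parab1Cond ℤ M₁ M₂ ⇑f₁) (I : Finset B₁) :
    f₁ (EOm ℤ M₁ I) = gprod ℤ (prodMatrix M₁ M₂) Sum.inl I := by
  rw [EOm, map_mul, gprod]
  congr 1
  · refine (Finset.map_noncommProd _ _ _ _).trans ?_
    exact Finset.noncommProd_congr rfl (fun b _ => (h₁ b).1) _
  · refine (Finset.map_noncommProd _ _ _ _).trans ?_
    refine Finset.noncommProd_congr rfl (fun b _ => ?_) _
    rw [map_sub, map_one, (h₁ b).1]

lemma map_EOm₂ (f₂ : Omega ℤ M₂ →+* Omega ℤ (prodMatrix M₁ M₂))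
    (h₂ : Parab2Cond ℤ M₁ M₂ ⇑f₂) (K : Finset B₂) :
    f₂ (EOm ℤ M₂ K) = gprod ℤ (prodMatrix M₁ M₂) Sum.inr K := by
  rw [EOm, map_mul, gprod]
  congr 1
  · refine (Finset.map_noncommProd _ _ _ _).trans ?_
    exact Finset.noncommProd_congr rfl (fun b _ => (h₂ b).1) _
  · refine (Finset.map_noncommProd _ _ _ _).trans ?_
    refine Finset.noncommProd_congr rfl (fun b _ => ?_) _
    rw [map_sub, map_one, (h₂ b).1]

lemma map_XOm₁ (f₁ : Omega ℤ M₁ →+* Omega ℤ (prodMatrix M₁ M₂))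
    (h₁ : Parab1Cond ℤ M₁ M₂ ⇑f₁) (I J : Finset B₁) (s : B₁) :
    f₁ (XOm ℤ M₁ I J s) = gprod ℤ (prodMatrix M₁ M₂) Sum.inl I
      * (xOm ℤ (prodMatrix M₁ M₂) (Sum.inl s) * gprod ℤ (prodMatrix M₁ M₂) Sum.inl J) := by
  rw [XOm, map_mul, map_mul, map_EOm₁ M₁ M₂ f₁ h₁, map_EOm₁ M₁ M₂ f₁ h₁, (h₁ s).2, mul_assoc]

lemma map_XOm₂ (f₂ : Omega ℤ M₂ →+* Omega ℤ (prodMatrix M₁ M₂))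
    (h₂ : Parab2Cond ℤ M₁ M₂ ⇑f₂) (K L : Finset B₂) (t : B₂) :
    f₂ (XOm ℤ M₂ K L t) = gprod ℤ (prodMatrix M₁ M₂) Sum.inr K
      * (xOm ℤ (prodMatrix M₁ M₂) (Sum.inr t) * gprod ℤ (prodMatrix M₁ M₂) Sum.inr L) := by
  rw [XOm, map_mul, map_mul, map_EOm₂ M₁ M₂ f₂ h₂, map_EOm₂ M₁ M₂ f₂ h₂, (h₂ t).2, mul_assoc]

end Final


/-- the images of `Ψ₁` and `Ψ₂` under the parabolic morphisms
`ι₁ : Ω₁ → Ω` and `ι₂ : Ω₂ → Ω` commute elementwise: `[ι₁(a), ι₂(b)] = 0`. -/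
theorem statement9 {B₁ B₂ : Type*} [Fintype B₁] [DecidableEq B₁] [Fintype B₂]
    [DecidableEq B₂] (M₁ : CoxeterMatrix B₁) (M₂ : CoxeterMatrix B₂)
    {W₁ W₂ : Type*} [Group W₁] [Group W₂] [Finite W₁] [Finite W₂]
    (cs₁ : CoxeterSystem M₁ W₁) (cs₂ : CoxeterSystem M₂ W₂)
    (cs : CoxeterSystem (prodMatrix M₁ M₂) (W₁ × W₂))
    (f₁ : Omega ℤ M₁ →+* Omega ℤ (prodMatrix M₁ M₂))
    (f₂ : Omega ℤ M₂ →+* Omega ℤ (prodMatrix M₁ M₂))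
    (h₁ : Parab1Cond ℤ M₁ M₂ ⇑f₁) (h₂ : Parab2Cond ℤ M₁ M₂ ⇑f₂)
    (a : Omega ℤ M₁) (ha : a ∈ Psi ℤ M₁) (b : Omega ℤ M₂) (hb : b ∈ Psi ℤ M₂) :
    Commute (f₁ a) (f₂ b) := by
  classical
  have hm : ∀ (c : B₁) (d : B₂), (prodMatrix M₁ M₂) (Sum.inl c) (Sum.inr d) = 2 :=
    fun c d => rfl
  have hm' : ∀ (d : B₂) (c : B₁), (prodMatrix M₁ M₂) (Sum.inr d) (Sum.inl c) = 2 :=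
    fun d c => rfl
  have key : ∀ p ∈ psiGens ℤ M₁, ∀ q ∈ psiGens ℤ M₂, Commute (f₁ p) (f₂ q) := by
    rintro p (⟨I, rfl⟩ | ⟨I, J, s, htr, hs, rfl⟩) q (⟨K, rfl⟩ | ⟨K, L, t, htr', ht, rfl⟩)
    · rw [map_EOm₁ M₁ M₂ f₁ h₁, map_EOm₂ M₁ M₂ f₂ h₂]
      exact commute_gprod_of ℤ (prodMatrix M₁ M₂) Sum.inr
        (fun d => (commute_eOm_gprod ℤ (prodMatrix M₁ M₂) Sum.inl (Sum.inr d) I).symm) K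
    · rw [map_EOm₁ M₁ M₂ f₁ h₁, map_XOm₂ M₁ M₂ f₂ h₂]
      rw [Finset.mem_sdiff] at ht
      exact (commute_gprod_of ℤ (prodMatrix M₁ M₂) Sum.inl
        (fun c => commute_gxg_eOm ℤ (prodMatrix M₁ M₂) Sum.inr ht.1 ht.2 htr'.2
          (fun d => hm' d c)) I).symm
    · rw [map_XOm₁ M₁ M₂ f₁ h₁, map_EOm₂ M₁ M₂ f₂ h₂]
      rw [Finset.mem_sdiff] at hs
      exact commute_gprod_of ℤ (prodMatrix M₁ M₂) Sum.inr
        (fun d => commute_gxg_eOm ℤ (prodMatrix M₁ M₂) Sum.inl hs.1 hs.2 htr.2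
          (fun c => hm c d)) K
    · rw [map_XOm₁ M₁ M₂ f₁ h₁, map_XOm₂ M₁ M₂ f₂ h₂]
      rw [Finset.mem_sdiff] at hs ht
      exact main_commute ℤ (prodMatrix M₁ M₂) Sum.inl Sum.inr hm
        hs.1 hs.2 htr.2 ht.1 ht.2 htr'.2
  have main : ∀ q ∈ Psi ℤ M₂, ∀ p ∈ Psi ℤ M₁, Commute (f₁ p) (f₂ q) := by
    intro q hq
    refine Subring.closure_induction ?_ ?_ ?_ ?_ ?_ ?_ hq
    · intro w hw p hp
      refine Subring.closure_induction ?_ ?_ ?_ ?_ ?_ ?_ hp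
      · intro v hv
        exact key v hv w hw
      · rw [map_zero]; exact Commute.zero_left _
      · rw [map_one]; exact Commute.one_left _
      · intro x y _ _ cx cy
        rw [map_add]; exact cx.add_left cy
      · intro x _ cx
        rw [map_neg]; exact cx.neg_left
      · intro x y _ _ cx cy
        rw [map_mul]; exact cx.mul_left cy
    · intro p _
      rw [map_zero]; exact Commute.zero_right _
    · intro p _
      rw [map_one]; exact Commute.one_right _
    · intro x y _ _ cx cy p hp
      rw [map_add]; exact (cx p hp).add_right (cy p hp)
    · intro x _ cx p hp
      rw [map_neg]; exact (cx p hp).neg_right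
    · intro x y _ _ cx cy p hp
      rw [map_mul]; exact (cx p hp).mul_right (cy p hp)
  exact main b hb a ha

end WGraphPaper

end
end
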